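/- arXiv:2305.08668 — 5 statements merged into one kernel-verified Lean document; each statement's English description precedes it below -/
import Mathlib

section
/- For every ν ∈ (0,1] there exists a constant C(ν) > 0 such that: for all real numbers t₁ < t₂ with t₂ − t₁ > 1 and every C² nonnegative function α : [t₁,t₂] → ℝ with α''(t) ≥ α(t) on [t₁,t₂], one has ∫_{t₁}^{t₂} α(t)^ν dt ≤ C(ν) (α(t₁)^ν + α(t₂)^ν). -/
open Set Filter


lemma deriv2_nonneg_of_isLocalMin {f : ℝ → ℝ} (hf : ContDiff ℝ 2 f) {m : ℝ}
    (h : IsLocalMin f m) : 0 ≤ deriv (deriv f) m := by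
  by_contra hneg
  push_neg at hneg
  have hf2 : ContDiff ℝ (1+1) f := by norm_num; exact hf
  have hf1 : ContDiff ℝ 1 (deriv f) := (contDiff_succ_iff_deriv.mp hf2).2.2
  have hfd : Differentiable ℝ f := hf.differentiable (by norm_num)
  have hd : HasDerivAt (deriv f) (deriv (deriv f) m) m :=
    ((hf1.differentiable (by norm_num)).differentiableAt (x := m)).hasDerivAt
  have h0 : deriv f m = 0 := h.deriv_eq_zero
  have hslope := hasDerivAt_iff_tendsto_slope.mp hd
  have hev : ∀ᶠ x in nhdsWithin m {m}ᶜ, slope (deriv f) m x < 0 :=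
    hslope.eventually_lt_const hneg
  have hev' : ∀ᶠ x in nhdsWithin m (Ioi m), deriv f x < 0 := by
    have hle : nhdsWithin m (Ioi m) ≤ nhdsWithin m {m}ᶜ :=
      nhdsWithin_mono m (fun x hx => ne_of_gt hx)
    filter_upwards [hle hev, self_mem_nhdsWithin] with x hx hxm
    have hxm' : (0:ℝ) < x - m := sub_pos.mpr hxm
    rw [slope_def_field, div_lt_iff₀ hxm'] at hx
    rw [h0] at hx
    simpa using hx
  rw [eventually_nhdsWithin_iff] at hev'
  rcases Metric.eventually_nhds_iff.mp hev' with ⟨δ, hδ, hball⟩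
  set u := m + δ/2 with hu
  have hmu : m < u := by simp [hu]; linarith
  have hderivneg : ∀ x ∈ interior (Icc m u), deriv f x < 0 := by
    intro x hx
    rw [interior_Icc] at hx
    refine hball (y := x) ?_ hx.1
    rw [Real.dist_eq, abs_lt]
    constructor <;> simp only [hu] at hx ⊢ <;> [linarith [hx.1]; linarith [hx.2]]
  have hanti : StrictAntiOn f (Icc m u) :=
    strictAntiOn_of_deriv_neg (convex_Icc m u) (hfd.continuous.continuousOn) hderivneg
  rcases Metric.eventually_nhds_iff.mp h with ⟨ε, hε, hmin⟩
  set x := m + min δ ε / 2 with hx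
  have hmin1 : 0 < min δ ε := lt_min hδ hε
  have hmin2 : min δ ε ≤ δ := min_le_left _ _
  have hmin3 : min δ ε ≤ ε := min_le_right _ _
  have h1 : m < x := by rw [hx]; linarith
  have h2 : x ≤ u := by rw [hx, hu]; linarith
  have h3 : dist x m < ε := by
    rw [Real.dist_eq, abs_lt, hx]
    constructor <;> [linarith; linarith]
  have hlt : f x < f m :=
    hanti (left_mem_Icc.mpr (h1.le.trans h2)) ⟨h1.le, h2⟩ h1
  exact absurd (hmin h3) (not_le.mpr hlt)


section
variable (a₁ a₂ t₁ t₂ : ℝ)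

lemma barrier_hasDeriv (t : ℝ) :
    HasDerivAt (fun s => (a₁ * Real.sinh (t₂ - s) + a₂ * Real.sinh (s - t₁)) / Real.sinh (t₂ - t₁))
      ((-(a₁ * Real.cosh (t₂ - t)) + a₂ * Real.cosh (t - t₁)) / Real.sinh (t₂ - t₁)) t := by
  have h1 : HasDerivAt (fun s : ℝ => t₂ - s) (-1) t := by
    simpa using (hasDerivAt_id t).const_sub t₂
  have h2 : HasDerivAt (fun s : ℝ => Real.sinh (t₂ - s)) (Real.cosh (t₂ - t) * (-1)) t :=
    (Real.hasDerivAt_sinh (t₂ - t)).comp t h1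
  have h3 : HasDerivAt (fun s : ℝ => s - t₁) 1 t := (hasDerivAt_id t).sub_const t₁
  have h4 : HasDerivAt (fun s : ℝ => Real.sinh (s - t₁)) (Real.cosh (t - t₁) * 1) t :=
    by have := (Real.hasDerivAt_sinh (t - t₁)).comp t h3; exact this
  have := ((h2.const_mul a₁).add (h4.const_mul a₂)).div_const (Real.sinh (t₂ - t₁))
  refine this.congr_deriv ?_
  ring

lemma barrier_hasDeriv2 (t : ℝ) :
    HasDerivAt (fun s => (-(a₁ * Real.cosh (t₂ - s)) + a₂ * Real.cosh (s - t₁)) / Real.sinh (t₂ - t₁))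
      ((a₁ * Real.sinh (t₂ - t) + a₂ * Real.sinh (t - t₁)) / Real.sinh (t₂ - t₁)) t := by
  have h1 : HasDerivAt (fun s : ℝ => t₂ - s) (-1) t := by
    simpa using (hasDerivAt_id t).const_sub t₂
  have h2 : HasDerivAt (fun s : ℝ => Real.cosh (t₂ - s)) (Real.sinh (t₂ - t) * (-1)) t :=
    (Real.hasDerivAt_cosh (t₂ - t)).comp t h1
  have h3 : HasDerivAt (fun s : ℝ => s - t₁) 1 t := (hasDerivAt_id t).sub_const t₁
  have h4 : HasDerivAt (fun s : ℝ => Real.cosh (s - t₁)) (Real.sinh (t - t₁) * 1) t :=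
    by have := (Real.hasDerivAt_cosh (t - t₁)).comp t h3; exact this
  have := (((h2.const_mul a₁).neg).add (h4.const_mul a₂)).div_const (Real.sinh (t₂ - t₁))
  refine this.congr_deriv ?_
  ring

end

lemma max_principle {t₁ t₂ : ℝ} (h12 : t₁ < t₂) {α : ℝ → ℝ} (hα : ContDiff ℝ 2 α)
    (hineq : ∀ t ∈ Icc t₁ t₂, α t ≤ deriv (deriv α) t) :
    ∀ t ∈ Icc t₁ t₂,
      α t ≤ (α t₁ * Real.sinh (t₂ - t) + α t₂ * Real.sinh (t - t₁)) / Real.sinh (t₂ - t₁) := by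
  set a₁ := α t₁
  set a₂ := α t₂
  set S := Real.sinh (t₂ - t₁) with hS
  have hSpos : 0 < S := Real.sinh_pos_iff.mpr (by linarith)
  set B : ℝ → ℝ := fun s => (a₁ * Real.sinh (t₂ - s) + a₂ * Real.sinh (s - t₁)) / S with hB
  set β : ℝ → ℝ := fun s => B s - α s with hβ
  have hBcd : ContDiff ℝ 2 B := by
    apply ContDiff.div_const
    exact (contDiff_const.mul (Real.contDiff_sinh.comp ((contDiff_const (c := t₂)).sub contDiff_id))).add
      (contDiff_const.mul (Real.contDiff_sinh.comp (contDiff_id.sub (contDiff_const (c := t₁)))))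
  have hβcd : ContDiff ℝ 2 β := hBcd.sub hα
  have hαd : Differentiable ℝ α := hα.differentiable (by norm_num)
  have hα2 : ContDiff ℝ (1+1) α := by norm_num; exact hα
  have hα1 : ContDiff ℝ 1 (deriv α) := (contDiff_succ_iff_deriv.mp hα2).2.2
  -- derivatives of β
  have hβ1 : ∀ t, HasDerivAt β
      ((-(a₁ * Real.cosh (t₂ - t)) + a₂ * Real.cosh (t - t₁)) / S - deriv α t) t := fun t =>
    (barrier_hasDeriv a₁ a₂ t₁ t₂ t).sub (hαd.differentiableAt.hasDerivAt)
  have hderivβ : deriv β = fun t =>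
      (-(a₁ * Real.cosh (t₂ - t)) + a₂ * Real.cosh (t - t₁)) / S - deriv α t := by
    funext t; exact (hβ1 t).deriv
  have hβ2 : ∀ t, HasDerivAt (deriv β) (B t - deriv (deriv α) t) t := by
    intro t
    rw [hderivβ]
    exact (barrier_hasDeriv2 a₁ a₂ t₁ t₂ t).sub
      (((hα1.differentiable (by norm_num)).differentiableAt (x := t)).hasDerivAt)
  -- endpoint values
  have hβt₁ : β t₁ = 0 := by
    simp only [hβ, hB]
    rw [sub_self, Real.sinh_zero]
    field_simp
    simp only [hS, a₁, a₂]
    ring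
  have hβt₂ : β t₂ = 0 := by
    simp only [hβ, hB]
    rw [sub_self, Real.sinh_zero]
    field_simp
    simp only [hS, a₁, a₂]
    ring
  -- min point
  obtain ⟨m, hmIcc, hmin⟩ := isCompact_Icc.exists_isMinOn (nonempty_Icc.mpr h12.le)
    (hβcd.continuous.continuousOn (s := Icc t₁ t₂))
  intro t ht
  rw [← sub_nonneg]
  have key : 0 ≤ β m := by
    by_contra hneg
    push_neg at hneg
    have hm1 : m ≠ t₁ := fun h => by rw [h, hβt₁] at hneg; linarith
    have hm2 : m ≠ t₂ := fun h => by rw [h, hβt₂] at hneg; linarith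
    have hmIoo : m ∈ Ioo t₁ t₂ := ⟨lt_of_le_of_ne hmIcc.1 (Ne.symm hm1), lt_of_le_of_ne hmIcc.2 hm2⟩
    have hloc : IsLocalMin β m := hmin.isLocalMin (Icc_mem_nhds hmIoo.1 hmIoo.2)
    have h2nd : 0 ≤ deriv (deriv β) m := deriv2_nonneg_of_isLocalMin hβcd hloc
    rw [(hβ2 m).deriv] at h2nd
    have := hineq m (Ioo_subset_Icc_self hmIoo)
    have : 0 ≤ B m - α m := by linarith
    rw [hβ] at hneg
    simp only at hneg
    linarith
  exact le_trans key (hmin ht)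



lemma sinh_ratio_le {s L : ℝ} (hs : 0 ≤ s) (hsL : s ≤ L) (hL : 1 ≤ L) :
    Real.sinh s / Real.sinh L ≤ 2 * Real.exp (s - L) := by
  have h1 : Real.sinh s ≤ Real.exp s / 2 := by
    rw [Real.sinh_eq]
    have := Real.exp_pos (-s)
    linarith
  have h2 : Real.exp L / 4 ≤ Real.sinh L := by
    rw [Real.sinh_eq]
    have e1 : Real.exp (-L) ≤ Real.exp (-1) := Real.exp_le_exp.mpr (by linarith)
    have e2 : Real.exp (-1) < 1 := Real.exp_lt_one_iff.mpr (by norm_num)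
    have e3 : (2:ℝ) ≤ Real.exp 1 := by
      have := Real.add_one_le_exp 1; linarith
    have e4 : Real.exp 1 ≤ Real.exp L := Real.exp_le_exp.mpr hL
    linarith
  have hLpos : 0 < Real.sinh L := Real.sinh_pos_iff.mpr (by linarith)
  have h3 : Real.sinh s / Real.sinh L ≤ (Real.exp s / 2) / (Real.exp L / 4) := by
    exact div_le_div₀ (by positivity) h1 (by positivity) h2
  refine h3.trans (le_of_eq ?_)
  rw [Real.exp_sub]
  field_simp
  ring




lemma real_rpow_add_le {x y p : ℝ} (hx : 0 ≤ x) (hy : 0 ≤ y) (hp : 0 ≤ p) (hp1 : p ≤ 1) :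
    (x + y) ^ p ≤ x ^ p + y ^ p := by
  have h := NNReal.rpow_add_le_add_rpow x.toNNReal y.toNNReal hp hp1
  rw [← Real.toNNReal_add hx hy] at h
  have h2 := NNReal.coe_le_coe.mpr h
  push_cast at h2
  rwa [Real.coe_toNNReal _ (by linarith : (0:ℝ) ≤ x + y), Real.coe_toNNReal _ hx,
    Real.coe_toNNReal _ hy] at h2

/-- For every `ν ∈ (0,1]` there is a constant `C(ν) > 0` such that any nonnegative `C²`
function `α` on an interval `[t₁,t₂]` of length `> 1` with `α'' ≥ α` satisfies
`∫_{t₁}^{t₂} α^ν ≤ C(ν) (α(t₁)^ν + α(t₂)^ν)`. -/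
theorem stmt1 (ν : ℝ) (hν : ν ∈ Ioc (0 : ℝ) 1) :
    ∃ C : ℝ, 0 < C ∧ ∀ t₁ t₂ : ℝ, 1 < t₂ - t₁ → ∀ α : ℝ → ℝ,
      ContDiff ℝ 2 α → (∀ t ∈ Icc t₁ t₂, 0 ≤ α t) →
      (∀ t ∈ Icc t₁ t₂, α t ≤ deriv (deriv α) t) →
      (∫ t in t₁..t₂, α t ^ ν) ≤ C * (α t₁ ^ ν + α t₂ ^ ν) := by
  obtain ⟨hν0, hν1⟩ := hν
  refine ⟨2 / ν, by positivity, ?_⟩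
  intro t₁ t₂ hL α hα hnn hineq
  have h12 : t₁ < t₂ := by linarith
  set a₁ := α t₁ with ha₁
  set a₂ := α t₂ with ha₂
  have ha₁0 : 0 ≤ a₁ := hnn t₁ (left_mem_Icc.mpr h12.le)
  have ha₂0 : 0 ≤ a₂ := hnn t₂ (right_mem_Icc.mpr h12.le)
  -- pointwise bound
  have hpt : ∀ t ∈ Icc t₁ t₂, α t ^ ν ≤
      (2 * a₁) ^ ν * Real.exp (ν * (t₁ - t)) + (2 * a₂) ^ ν * Real.exp (ν * (t - t₂)) := by
    intro t ht
    have hmp := max_principle h12 hα hineq t ht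
    have hr1 : Real.sinh (t₂ - t) / Real.sinh (t₂ - t₁) ≤ 2 * Real.exp (t₁ - t) := by
      have := sinh_ratio_le (s := t₂ - t) (L := t₂ - t₁)
        (by linarith [ht.2]) (by linarith [ht.1]) hL.le
      convert this using 3
      ring
    have hr2 : Real.sinh (t - t₁) / Real.sinh (t₂ - t₁) ≤ 2 * Real.exp (t - t₂) := by
      have := sinh_ratio_le (s := t - t₁) (L := t₂ - t₁)
        (by linarith [ht.1]) (by linarith [ht.2]) hL.le
      convert this using 3
      ring
    have hbd : α t ≤ 2 * a₁ * Real.exp (t₁ - t) + 2 * a₂ * Real.exp (t - t₂) := by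
      have h1 : α t ≤ a₁ * (Real.sinh (t₂ - t) / Real.sinh (t₂ - t₁)) +
          a₂ * (Real.sinh (t - t₁) / Real.sinh (t₂ - t₁)) := by
        rw [← mul_div_assoc, ← mul_div_assoc, ← add_div]
        exact hmp
      calc α t ≤ _ := h1
        _ ≤ a₁ * (2 * Real.exp (t₁ - t)) + a₂ * (2 * Real.exp (t - t₂)) := by
            gcongr
        _ = 2 * a₁ * Real.exp (t₁ - t) + 2 * a₂ * Real.exp (t - t₂) := by ring
    have hx : (0:ℝ) ≤ 2 * a₁ * Real.exp (t₁ - t) := by positivity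
    have hy : (0:ℝ) ≤ 2 * a₂ * Real.exp (t - t₂) := by positivity
    calc α t ^ ν ≤ (2 * a₁ * Real.exp (t₁ - t) + 2 * a₂ * Real.exp (t - t₂)) ^ ν :=
          Real.rpow_le_rpow (hnn t ht) hbd hν0.le
      _ ≤ (2 * a₁ * Real.exp (t₁ - t)) ^ ν + (2 * a₂ * Real.exp (t - t₂)) ^ ν :=
          real_rpow_add_le hx hy hν0.le hν1
      _ = (2 * a₁) ^ ν * Real.exp (ν * (t₁ - t)) + (2 * a₂) ^ ν * Real.exp (ν * (t - t₂)) := by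
          rw [Real.mul_rpow (by positivity) (Real.exp_pos _).le,
            Real.mul_rpow (by positivity) (Real.exp_pos _).le,
            ← Real.exp_mul, ← Real.exp_mul]
          ring_nf
  -- integrals of the exponentials
  have hI₁ : ∫ t in t₁..t₂, Real.exp (ν * (t₁ - t)) = (1 - Real.exp (ν * (t₁ - t₂))) / ν := by
    have hder : ∀ t ∈ uIcc t₁ t₂, HasDerivAt (fun t => -Real.exp (ν * (t₁ - t)) / ν)
        (Real.exp (ν * (t₁ - t))) t := by
      intro t _
      have hin : HasDerivAt (fun t : ℝ => ν * (t₁ - t)) (-ν) t := by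
        simpa using ((hasDerivAt_id t).const_sub t₁).const_mul ν
      have := ((Real.hasDerivAt_exp (ν * (t₁ - t))).comp t hin).neg.div_const ν
      refine this.congr_deriv ?_
      field_simp
    rw [intervalIntegral.integral_eq_sub_of_hasDerivAt hder
      ((Real.continuous_exp.comp (by fun_prop)).intervalIntegrable t₁ t₂)]
    have : ν * (t₁ - t₁) = 0 := by ring
    rw [this, Real.exp_zero]
    ring
  have hI₂ : ∫ t in t₁..t₂, Real.exp (ν * (t - t₂)) = (1 - Real.exp (ν * (t₁ - t₂))) / ν := by
    have hder : ∀ t ∈ uIcc t₁ t₂, HasDerivAt (fun t => Real.exp (ν * (t - t₂)) / ν)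
        (Real.exp (ν * (t - t₂))) t := by
      intro t _
      have hin : HasDerivAt (fun t : ℝ => ν * (t - t₂)) ν t := by
        simpa using ((hasDerivAt_id t).sub_const t₂).const_mul ν
      have := ((Real.hasDerivAt_exp (ν * (t - t₂))).comp t hin).div_const ν
      refine this.congr_deriv ?_
      field_simp
    rw [intervalIntegral.integral_eq_sub_of_hasDerivAt hder
      ((Real.continuous_exp.comp (by fun_prop)).intervalIntegrable t₁ t₂)]
    have : ν * (t₂ - t₂) = 0 := by ring
    rw [this, Real.exp_zero]
    ring
  -- integrability
  have hcont : Continuous fun t => α t ^ ν := by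
    rw [continuous_iff_continuousAt]
    intro t
    exact (Real.continuousAt_rpow_const _ _ (Or.inr hν0.le)).comp hα.continuous.continuousAt
  have hg : Continuous fun t =>
      (2 * a₁) ^ ν * Real.exp (ν * (t₁ - t)) + (2 * a₂) ^ ν * Real.exp (ν * (t - t₂)) := by
    fun_prop
  have hmono := intervalIntegral.integral_mono_on (μ := MeasureTheory.volume) h12.le
    (hcont.intervalIntegrable t₁ t₂) (hg.intervalIntegrable t₁ t₂) hpt
  have hsplit : ∫ t in t₁..t₂,
      ((2 * a₁) ^ ν * Real.exp (ν * (t₁ - t)) + (2 * a₂) ^ ν * Real.exp (ν * (t - t₂)))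
      = (2 * a₁) ^ ν * ((1 - Real.exp (ν * (t₁ - t₂))) / ν)
        + (2 * a₂) ^ ν * ((1 - Real.exp (ν * (t₁ - t₂))) / ν) := by
    rw [intervalIntegral.integral_add
        ((Continuous.intervalIntegrable (by fun_prop) t₁ t₂))
        ((Continuous.intervalIntegrable (by fun_prop) t₁ t₂)),
      intervalIntegral.integral_const_mul, intervalIntegral.integral_const_mul, hI₁, hI₂]
  have hIle : (1 - Real.exp (ν * (t₁ - t₂))) / ν ≤ 1 / ν := by
    gcongr
    have := Real.exp_pos (ν * (t₁ - t₂))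
    linarith
  have h2ν : (2:ℝ) ^ ν ≤ 2 := by
    calc (2:ℝ) ^ ν ≤ (2:ℝ) ^ (1:ℝ) := Real.rpow_le_rpow_of_exponent_le one_le_two hν1
      _ = 2 := Real.rpow_one 2
  have hfinal : (2 * a₁) ^ ν * ((1 - Real.exp (ν * (t₁ - t₂))) / ν)
        + (2 * a₂) ^ ν * ((1 - Real.exp (ν * (t₁ - t₂))) / ν)
      ≤ 2 / ν * (a₁ ^ ν + a₂ ^ ν) := by
    have e1 : (2 * a₁ : ℝ) ^ ν = 2 ^ ν * a₁ ^ ν := Real.mul_rpow (by norm_num) ha₁0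
    have e2 : (2 * a₂ : ℝ) ^ ν = 2 ^ ν * a₂ ^ ν := Real.mul_rpow (by norm_num) ha₂0
    have p1 : (0:ℝ) ≤ a₁ ^ ν := Real.rpow_nonneg ha₁0 ν
    have p2 : (0:ℝ) ≤ a₂ ^ ν := Real.rpow_nonneg ha₂0 ν
    have p3 : (0:ℝ) ≤ (2 * a₁) ^ ν := Real.rpow_nonneg (by positivity) ν
    have p4 : (0:ℝ) ≤ (2 * a₂) ^ ν := Real.rpow_nonneg (by positivity) ν
    calc (2 * a₁) ^ ν * ((1 - Real.exp (ν * (t₁ - t₂))) / ν)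
          + (2 * a₂) ^ ν * ((1 - Real.exp (ν * (t₁ - t₂))) / ν)
        ≤ (2 * a₁) ^ ν * (1 / ν) + (2 * a₂) ^ ν * (1 / ν) := by gcongr
      _ = (2 ^ ν * a₁ ^ ν + 2 ^ ν * a₂ ^ ν) / ν := by rw [e1, e2]; ring
      _ ≤ (2 * a₁ ^ ν + 2 * a₂ ^ ν) / ν := by gcongr <;> positivity
      _ = 2 / ν * (a₁ ^ ν + a₂ ^ ν) := by ring
  calc (∫ t in t₁..t₂, α t ^ ν) ≤ _ := hmono
    _ = _ := hsplit
    _ ≤ 2 / ν * (a₁ ^ ν + a₂ ^ ν) := hfinal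
end

section
/- Let T > 0 and let Y : ℝ² → ℝ⁵ be smooth, 2π-periodic in θ, harmonic into de Sitter space and η-conformal on [−T,T] × ℝ, with M := sup_{[−T,T]×ℝ} |Y|_ξ and G := sup_{[−T,T]×ℝ} |∇Y|_ξ both finite. Define α(t) := ∫₀^{2π} |∂_θY(t,θ)|²_ξ dθ and β(t) := ∫₀^{2π} |∇Y(t,θ)|²_ξ dθ. Then for every t ∈ (−T,T), |β'(t) − 2α'(t)| ≤ 4 M G α(t). -/
open Real Set MeasureTheory intervalIntegral Filter

noncomputable section

/-- ℝ⁵ with its euclidean norm. -/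
abbrev E5 := EuclideanSpace ℝ (Fin 5)

/-- The Minkowski bilinear form `η` on ℝ⁵. -/
def etaM (x y : E5) : ℝ := x 0 * y 0 + x 1 * y 1 + x 2 * y 2 + x 3 * y 3 - x 4 * y 4

/-- Partial derivative in the first (`t`) variable. -/
def pT (Y : ℝ → ℝ → E5) : ℝ → ℝ → E5 := fun t θ => deriv (fun s => Y s θ) t

/-- Partial derivative in the second (`θ`) variable. -/
def pTh (Y : ℝ → ℝ → E5) : ℝ → ℝ → E5 := fun t θ => deriv (fun s => Y t s) θ

/-- The flat Laplacian `ΔY = ∂²_{tt}Y + ∂²_{θθ}Y`. -/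
def lapY (Y : ℝ → ℝ → E5) (t θ : ℝ) : E5 := pT (pT Y) t θ + pTh (pTh Y) t θ

/-- `|∇Y|²_η = η(∂_tY,∂_tY) + η(∂_θY,∂_θY)`. -/
def gradSqEta (Y : ℝ → ℝ → E5) (t θ : ℝ) : ℝ :=
  etaM (pT Y t θ) (pT Y t θ) + etaM (pTh Y t θ) (pTh Y t θ)

/-- `|∇Y|²_ξ = |∂_tY|²_ξ + |∂_θY|²_ξ` (euclidean). -/
def gradSqXi (Y : ℝ → ℝ → E5) (t θ : ℝ) : ℝ :=
  ‖pT Y t θ‖ ^ 2 + ‖pTh Y t θ‖ ^ 2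

/-- `Y` is `2π`-periodic in `θ`. -/
def Periodic2pi (Y : ℝ → ℝ → E5) : Prop := ∀ t θ : ℝ, Y t (θ + 2 * π) = Y t θ

/-- `Y` is harmonic into de Sitter space on `I × ℝ` : `ΔY = −|∇Y|²_η Y`. -/
def HarmonicDS (Y : ℝ → ℝ → E5) (I : Set ℝ) : Prop :=
  ∀ t ∈ I, ∀ θ : ℝ, lapY Y t θ = -(gradSqEta Y t θ) • Y t θ

/-- `Y` is `η`-conformal on `I × ℝ`. -/
def ConformalEta (Y : ℝ → ℝ → E5) (I : Set ℝ) : Prop :=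
  ∀ t ∈ I, ∀ θ : ℝ,
    etaM (pT Y t θ) (pT Y t θ) = etaM (pTh Y t θ) (pTh Y t θ) ∧
    etaM (pT Y t θ) (pTh Y t θ) = 0

/-- `α(t) = ∫₀^{2π} |∂_θY(t,θ)|²_ξ dθ`. -/
def alphaF (Y : ℝ → ℝ → E5) (t : ℝ) : ℝ := ∫ θ in (0:ℝ)..(2 * π), ‖pTh Y t θ‖ ^ 2

/-- `β(t) = ∫₀^{2π} |∇Y(t,θ)|²_ξ dθ`. -/
def betaF (Y : ℝ → ℝ → E5) (t : ℝ) : ℝ := ∫ θ in (0:ℝ)..(2 * π), gradSqXi Y t θ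

/-- The circle average `Y*(t) = (1/2π) ∫₀^{2π} Y(t,θ) dθ`. -/
def Ystar (Y : ℝ → ℝ → E5) (t : ℝ) : E5 := (2 * π)⁻¹ • ∫ θ in (0:ℝ)..(2 * π), Y t θ

/-- `γ(t) = ∫₀^{2π} (|∂_t(Y − Y*)(t,θ)|²_ξ + |∂_θY(t,θ)|²_ξ) dθ`. -/
def gammaF (Y : ℝ → ℝ → E5) (t : ℝ) : ℝ :=
  ∫ θ in (0:ℝ)..(2 * π), (‖pT Y t θ - deriv (Ystar Y) t‖ ^ 2 + ‖pTh Y t θ‖ ^ 2)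

/-- `δ(t) = ∫₀^{2π} (|∂²_{tθ}Y|²_ξ + |∂²_{θθ}Y|²_ξ) dθ`. -/
def deltaF (Y : ℝ → ℝ → E5) (t : ℝ) : ℝ :=
  ∫ θ in (0:ℝ)..(2 * π), (‖pT (pTh Y) t θ‖ ^ 2 + ‖pTh (pTh Y) t θ‖ ^ 2)

namespace Stmt4Aux

open Function Metric

local notation "⟪" x ", " y "⟫" => @inner ℝ E5 _ x y

variable {F : Type*} [NormedAddCommGroup F] [NormedSpace ℝ F]

lemma hasDerivAt_slice1 (g : ℝ × ℝ → F) (hg : Differentiable ℝ g) (t θ : ℝ) :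
    HasDerivAt (fun s => g (s, θ)) (fderiv ℝ g (t, θ) (1, 0)) t := by
  have h2 : HasDerivAt (fun s : ℝ => (s, θ)) ((1 : ℝ), (0 : ℝ)) t :=
    (hasDerivAt_id t).prodMk (hasDerivAt_const t θ)
  exact (hg (t, θ)).hasFDerivAt.comp_hasDerivAt t h2

lemma hasDerivAt_slice2 (g : ℝ × ℝ → F) (hg : Differentiable ℝ g) (t θ : ℝ) :
    HasDerivAt (fun s => g (t, s)) (fderiv ℝ g (t, θ) (0, 1)) θ := by
  have h2 : HasDerivAt (fun s : ℝ => (t, s)) ((0 : ℝ), (1 : ℝ)) θ :=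
    (hasDerivAt_const θ t).prodMk (hasDerivAt_id θ)
  exact (hg (t, θ)).hasFDerivAt.comp_hasDerivAt θ h2

variable (Z : ℝ → ℝ → E5)

lemma hasDerivAt_pT (hZ : Differentiable ℝ (uncurry Z)) (t θ : ℝ) :
    HasDerivAt (fun s => Z s θ) (pT Z t θ) t := by
  have h := hasDerivAt_slice1 (uncurry Z) hZ t θ
  have he : pT Z t θ = fderiv ℝ (uncurry Z) (t, θ) (1, 0) := h.deriv
  rw [he]; exact h

lemma hasDerivAt_pTh (hZ : Differentiable ℝ (uncurry Z)) (t θ : ℝ) :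
    HasDerivAt (fun s => Z t s) (pTh Z t θ) θ := by
  have h := hasDerivAt_slice2 (uncurry Z) hZ t θ
  have he : pTh Z t θ = fderiv ℝ (uncurry Z) (t, θ) (0, 1) := h.deriv
  rw [he]; exact h

lemma pT_eq (hZ : Differentiable ℝ (uncurry Z)) (t θ : ℝ) :
    pT Z t θ = fderiv ℝ (uncurry Z) (t, θ) (1, 0) :=
  (hasDerivAt_slice1 (uncurry Z) hZ t θ).deriv

lemma pTh_eq (hZ : Differentiable ℝ (uncurry Z)) (t θ : ℝ) :
    pTh Z t θ = fderiv ℝ (uncurry Z) (t, θ) (0, 1) :=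
  (hasDerivAt_slice2 (uncurry Z) hZ t θ).deriv

lemma contDiff_uncurry_pT (hZ : ContDiff ℝ (⊤ : ℕ∞) (uncurry Z)) :
    ContDiff ℝ (⊤ : ℕ∞) (uncurry (pT Z)) := by
  have he : uncurry (pT Z) = fun p : ℝ × ℝ => fderiv ℝ (uncurry Z) p (1, 0) := by
    funext p
    exact pT_eq Z (hZ.differentiable (by simp)) p.1 p.2
  rw [he]
  exact (hZ.fderiv_right (by simp)).clm_apply contDiff_const

lemma contDiff_uncurry_pTh (hZ : ContDiff ℝ (⊤ : ℕ∞) (uncurry Z)) :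
    ContDiff ℝ (⊤ : ℕ∞) (uncurry (pTh Z)) := by
  have he : uncurry (pTh Z) = fun p : ℝ × ℝ => fderiv ℝ (uncurry Z) p (0, 1) := by
    funext p
    exact pTh_eq Z (hZ.differentiable (by simp)) p.1 p.2
  rw [he]
  exact (hZ.fderiv_right (by simp)).clm_apply contDiff_const

lemma mixed_symm (hY : ContDiff ℝ (⊤ : ℕ∞) (uncurry Z)) (t θ : ℝ) :
    pT (pTh Z) t θ = pTh (pT Z) t θ := by
  set f := uncurry Z
  set g := fderiv ℝ f with hg
  have hg1 : ContDiff ℝ (⊤ : ℕ∞) g := hY.fderiv_right (by simp)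
  have hgd : Differentiable ℝ g := hg1.differentiable (by simp)
  have h1 : pT (pTh Z) t θ = fderiv ℝ g (t, θ) (1, 0) (0, 1) := by
    have hf : (fun s => pTh Z s θ) = fun s => g (s, θ) (0, 1) := by
      funext s; exact pTh_eq Z (hY.differentiable (by simp)) s θ
    have hd : HasDerivAt (fun s => g (s, θ) (0, 1))
        (fderiv ℝ g (t, θ) (1, 0) (0, 1)) t := by
      have := (hasDerivAt_slice1 g hgd t θ).clm_apply
        (hasDerivAt_const t ((0 : ℝ), (1 : ℝ)))
      simpa using this
    show deriv (fun s => pTh Z s θ) t = _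
    rw [hf]; exact hd.deriv
  have h2 : pTh (pT Z) t θ = fderiv ℝ g (t, θ) (0, 1) (1, 0) := by
    have hf : (fun s => pT Z t s) = fun s => g (t, s) (1, 0) := by
      funext s; exact pT_eq Z (hY.differentiable (by simp)) t s
    have hd : HasDerivAt (fun s => g (t, s) (1, 0))
        (fderiv ℝ g (t, θ) (0, 1) (1, 0)) θ := by
      have := (hasDerivAt_slice2 g hgd t θ).clm_apply
        (hasDerivAt_const θ ((1 : ℝ), (0 : ℝ)))
      simpa using this
    show deriv (fun s => pT Z t s) θ = _
    rw [hf]; exact hd.deriv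
  rw [h1, h2]
  exact second_derivative_symmetric
    (fun y => ((hY.differentiable (by simp)) y).hasFDerivAt)
    (hgd (t, θ)).hasFDerivAt _ _

lemma hasDerivAt_param_integral (g g' : ℝ → ℝ → ℝ)
    (hc : Continuous fun p : ℝ × ℝ => g p.1 p.2)
    (hc' : Continuous fun p : ℝ × ℝ => g' p.1 p.2)
    (hd : ∀ s θ : ℝ, HasDerivAt (fun x => g x θ) (g' s θ) s) (t : ℝ) :
    HasDerivAt (fun s => ∫ θ in (0:ℝ)..(2*π), g s θ)
      (∫ θ in (0:ℝ)..(2*π), g' t θ) t := by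
  have hK : IsCompact ((Icc (t-1) (t+1)) ×ˢ (uIcc (0:ℝ) (2*π))) :=
    isCompact_Icc.prod isCompact_uIcc
  obtain ⟨C, hC⟩ := hK.exists_bound_of_continuousOn hc'.continuousOn
  have main := intervalIntegral.hasDerivAt_integral_of_dominated_loc_of_deriv_le
    (F := g) (F' := g') (x₀ := t) (a := 0) (b := 2*π) (μ := volume)
    (bound := fun _ => C) (s := Metric.ball t 1) (Metric.ball_mem_nhds t one_pos)
    (Eventually.of_forall fun x =>
      (hc.comp (Continuous.prodMk_right x)).aestronglyMeasurable)
    ((hc.comp (Continuous.prodMk_right t)).intervalIntegrable _ _)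
    ((hc'.comp (Continuous.prodMk_right t)).aestronglyMeasurable)
    (ae_of_all _ fun θ hθ x hx => by
      have hmem : (x, θ) ∈ (Icc (t-1) (t+1)) ×ˢ (uIcc (0:ℝ) (2*π)) := by
        constructor
        · have := abs_lt.1 (by simpa [Real.dist_eq] using hx)
          constructor <;> [linarith [this.1]; linarith [this.2]]
        · exact uIoc_subset_uIcc hθ
      exact hC _ hmem)
    (intervalIntegrable_const)
    (ae_of_all _ fun θ _ x _ => hd x θ)
  exact main.2

lemma abs_etaM_self_le (x : E5) : |etaM x x| ≤ ‖x‖ ^ 2 := by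
  have hn : ‖x‖ ^ 2 = x 0 ^ 2 + x 1 ^ 2 + x 2 ^ 2 + x 3 ^ 2 + x 4 ^ 2 := by
    simp only [EuclideanSpace.real_norm_sq_eq, Fin.sum_univ_five, Real.norm_eq_abs, sq_abs]
  rw [abs_le]
  unfold etaM
  constructor <;> nlinarith [sq_nonneg (x 0), sq_nonneg (x 1), sq_nonneg (x 2),
    sq_nonneg (x 3), sq_nonneg (x 4)]

end Stmt4Aux

/-- For a conformal harmonic map into de Sitter space, bounded by `M` with gradient bounded
by `G`, one has `|β'(t) − 2α'(t)| ≤ 4 M G α(t)`. -/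
theorem stmt4 (T M G : ℝ) (hT : 0 < T) (Y : ℝ → ℝ → E5)
    (hsm : ContDiff ℝ (⊤ : ℕ∞) (Function.uncurry Y))
    (hper : Periodic2pi Y)
    (hharm : HarmonicDS Y (Icc (-T) T))
    (hconf : ConformalEta Y (Icc (-T) T))
    (hM : ∀ t ∈ Icc (-T) T, ∀ θ : ℝ, ‖Y t θ‖ ≤ M)
    (hG : ∀ t ∈ Icc (-T) T, ∀ θ : ℝ, Real.sqrt (gradSqXi Y t θ) ≤ G) :
    ∀ t ∈ Ioo (-T) T,
      |deriv (betaF Y) t - 2 * deriv (alphaF Y) t| ≤ 4 * M * G * alphaF Y t := by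
  intro t ht
  have htI : t ∈ Icc (-T) T := Ioo_subset_Icc_self ht
  have two_pi_nonneg : (0:ℝ) ≤ 2 * π := by positivity
  -- smoothness of partial derivatives
  have hu : ContDiff ℝ (⊤ : ℕ∞) (Function.uncurry (pT Y)) := Stmt4Aux.contDiff_uncurry_pT Y hsm
  have hv : ContDiff ℝ (⊤ : ℕ∞) (Function.uncurry (pTh Y)) := Stmt4Aux.contDiff_uncurry_pTh Y hsm
  have huu := Stmt4Aux.contDiff_uncurry_pT (pT Y) hu
  have huv := Stmt4Aux.contDiff_uncurry_pT (pTh Y) hv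
  have hvu := Stmt4Aux.contDiff_uncurry_pTh (pT Y) hu
  have hvv := Stmt4Aux.contDiff_uncurry_pTh (pTh Y) hv
  -- continuity, uncurried
  have cu : Continuous fun p : ℝ × ℝ => pT Y p.1 p.2 := hu.continuous
  have cv : Continuous fun p : ℝ × ℝ => pTh Y p.1 p.2 := hv.continuous
  have cuu : Continuous fun p : ℝ × ℝ => pT (pT Y) p.1 p.2 := huu.continuous
  have cuv : Continuous fun p : ℝ × ℝ => pT (pTh Y) p.1 p.2 := huv.continuous
  have cvu : Continuous fun p : ℝ × ℝ => pTh (pT Y) p.1 p.2 := hvu.continuous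
  have cvv : Continuous fun p : ℝ × ℝ => pTh (pTh Y) p.1 p.2 := hvv.continuous
  -- continuity of slices at time t
  have sY : Continuous fun θ => Y t θ := hsm.continuous.comp (Continuous.prodMk_right t)
  have su : Continuous fun θ => pT Y t θ := cu.comp (Continuous.prodMk_right t)
  have sv : Continuous fun θ => pTh Y t θ := cv.comp (Continuous.prodMk_right t)
  have suu : Continuous fun θ => pT (pT Y) t θ := cuu.comp (Continuous.prodMk_right t)
  have suv : Continuous fun θ => pT (pTh Y) t θ := cuv.comp (Continuous.prodMk_right t)
  have svu : Continuous fun θ => pTh (pT Y) t θ := cvu.comp (Continuous.prodMk_right t)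
  have svv : Continuous fun θ => pTh (pTh Y) t θ := cvv.comp (Continuous.prodMk_right t)
  -- derivative of ‖Z x θ‖² in x
  have normsq_d : ∀ (Z : ℝ → ℝ → E5), ContDiff ℝ (⊤ : ℕ∞) (Function.uncurry Z) →
      ∀ s θ : ℝ, HasDerivAt (fun x => ‖Z x θ‖ ^ 2)
        (2 * (inner ℝ (Z s θ) (pT Z s θ) : ℝ)) s := by
    intro Z hZ s θ
    have h1 : HasDerivAt (fun x => Z x θ) (pT Z s θ) s :=
      Stmt4Aux.hasDerivAt_pT Z (hZ.differentiable (by simp)) s θ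
    have h2 := HasDerivAt.inner ℝ h1 h1
    have h3 : (fun x : ℝ => (inner ℝ (Z x θ) (Z x θ) : ℝ)) = fun x => ‖Z x θ‖ ^ 2 := by
      funext x; exact real_inner_self_eq_norm_sq _
    rw [h3] at h2
    refine h2.congr_deriv ?_
    rw [real_inner_comm (Z s θ) (pT Z s θ)]; ring
  -- derivative of α
  have hAder : HasDerivAt (alphaF Y)
      (∫ θ in (0:ℝ)..(2*π), 2 * (inner ℝ (pTh Y t θ) (pT (pTh Y) t θ) : ℝ)) t := by
    have key := Stmt4Aux.hasDerivAt_param_integral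
      (fun s θ => ‖pTh Y s θ‖ ^ 2)
      (fun s θ => 2 * (inner ℝ (pTh Y s θ) (pT (pTh Y) s θ) : ℝ))
      (cv.norm.pow 2)
      (continuous_const.mul (cv.inner cuv))
      (normsq_d (pTh Y) hv) t
    exact key
  -- derivative of β
  have hBder : HasDerivAt (betaF Y)
      (∫ θ in (0:ℝ)..(2*π),
        (2 * (inner ℝ (pT Y t θ) (pT (pT Y) t θ) : ℝ)
          + 2 * (inner ℝ (pTh Y t θ) (pT (pTh Y) t θ) : ℝ))) t := by
    have key := Stmt4Aux.hasDerivAt_param_integral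
      (fun s θ => ‖pT Y s θ‖ ^ 2 + ‖pTh Y s θ‖ ^ 2)
      (fun s θ => 2 * (inner ℝ (pT Y s θ) (pT (pT Y) s θ) : ℝ)
          + 2 * (inner ℝ (pTh Y s θ) (pT (pTh Y) s θ) : ℝ))
      ((cu.norm.pow 2).add (cv.norm.pow 2))
      ((continuous_const.mul (cu.inner cuu)).add (continuous_const.mul (cv.inner cuv)))
      (fun s θ => (normsq_d (pT Y) hu s θ).add (normsq_d (pTh Y) hv s θ)) t
    exact key
  -- integrability of various slices
  have i1 : IntervalIntegrable (fun θ => 2 * (inner ℝ (pT Y t θ) (pT (pT Y) t θ) : ℝ))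
      volume 0 (2*π) := (continuous_const.mul (su.inner suu)).intervalIntegrable _ _
  have i2 : IntervalIntegrable (fun θ => 2 * (inner ℝ (pTh Y t θ) (pT (pTh Y) t θ) : ℝ))
      volume 0 (2*π) := (continuous_const.mul (sv.inner suv)).intervalIntegrable _ _
  have i3 : IntervalIntegrable (fun θ => 2 * (inner ℝ (pT Y t θ) (pTh (pTh Y) t θ) : ℝ))
      volume 0 (2*π) := (continuous_const.mul (su.inner svv)).intervalIntegrable _ _
  have ia : IntervalIntegrable (fun θ => (inner ℝ (pT Y t θ) (pTh (pTh Y) t θ) : ℝ))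
      volume 0 (2*π) := (su.inner svv).intervalIntegrable _ _
  have ib : IntervalIntegrable (fun θ => (inner ℝ (pTh (pT Y) t θ) (pTh Y t θ) : ℝ))
      volume 0 (2*π) := (svu.inner sv).intervalIntegrable _ _
  -- boundary values (periodicity)
  have hbu : pT Y t (2*π) = pT Y t 0 := by
    have hfe : (fun s => Y s (2*π)) = fun s => Y s 0 := by
      funext s; rw [← zero_add (2*π)]; exact hper s 0
    show deriv (fun s => Y s (2*π)) t = deriv (fun s => Y s 0) t
    rw [hfe]
  have hbv : pTh Y t (2*π) = pTh Y t 0 := by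
    have h0 : (fun s => Y t (s + 2*π)) = fun s => Y t s := by
      funext s; exact hper t s
    show deriv (fun s => Y t s) (2*π) = deriv (fun s => Y t s) 0
    rw [show (2*π) = 0 + 2*π by ring, ← deriv_comp_add_const, h0]
  -- integration by parts on the circle
  have hibp : (∫ θ in (0:ℝ)..(2*π),
      ((inner ℝ (pT Y t θ) (pTh (pTh Y) t θ) : ℝ)
        + (inner ℝ (pTh (pT Y) t θ) (pTh Y t θ) : ℝ))) = 0 := by
    have hd : ∀ θ ∈ uIcc (0:ℝ) (2*π),
        HasDerivAt (fun s => (inner ℝ (pT Y t s) (pTh Y t s) : ℝ))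
          ((inner ℝ (pT Y t θ) (pTh (pTh Y) t θ) : ℝ)
            + (inner ℝ (pTh (pT Y) t θ) (pTh Y t θ) : ℝ)) θ := by
      intro θ _
      exact HasDerivAt.inner ℝ
        (Stmt4Aux.hasDerivAt_pTh (pT Y) (hu.differentiable (by simp)) t θ)
        (Stmt4Aux.hasDerivAt_pTh (pTh Y) (hv.differentiable (by simp)) t θ)
    have hint : IntervalIntegrable (fun θ =>
        ((inner ℝ (pT Y t θ) (pTh (pTh Y) t θ) : ℝ)
          + (inner ℝ (pTh (pT Y) t θ) (pTh Y t θ) : ℝ))) volume 0 (2*π) := ia.add ib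
    have hkey := intervalIntegral.integral_eq_sub_of_hasDerivAt hd hint
    rw [hkey]
    simp only [hbu, hbv, sub_self]
  -- the main identity
  have hW : deriv (betaF Y) t - 2 * deriv (alphaF Y) t
      = ∫ θ in (0:ℝ)..(2*π),
          (-2) * gradSqEta Y t θ * (inner ℝ (pT Y t θ) (Y t θ) : ℝ) := by
    rw [hBder.deriv, hAder.deriv]
    rw [intervalIntegral.integral_add i1 i2]
    have hf2 : (∫ θ in (0:ℝ)..(2*π), 2 * (inner ℝ (pTh Y t θ) (pT (pTh Y) t θ) : ℝ))
        = - ∫ θ in (0:ℝ)..(2*π), 2 * (inner ℝ (pT Y t θ) (pTh (pTh Y) t θ) : ℝ) := by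
      have h1 : (fun θ => 2 * (inner ℝ (pTh Y t θ) (pT (pTh Y) t θ) : ℝ))
          = fun θ => 2 * (inner ℝ (pTh (pT Y) t θ) (pTh Y t θ) : ℝ) := by
        funext θ
        rw [Stmt4Aux.mixed_symm Y hsm, real_inner_comm]
      rw [h1]
      have hsum : (∫ θ in (0:ℝ)..(2*π), (inner ℝ (pT Y t θ) (pTh (pTh Y) t θ) : ℝ))
          + (∫ θ in (0:ℝ)..(2*π), (inner ℝ (pTh (pT Y) t θ) (pTh Y t θ) : ℝ)) = 0 := by
        rw [← intervalIntegral.integral_add ia ib]; exact hibp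
      rw [intervalIntegral.integral_const_mul, intervalIntegral.integral_const_mul]
      linarith [hsum]
    rw [hf2]
    have hcomb : (∫ θ in (0:ℝ)..(2*π), 2 * (inner ℝ (pT Y t θ) (pT (pT Y) t θ) : ℝ))
        - -(∫ θ in (0:ℝ)..(2*π), 2 * (inner ℝ (pT Y t θ) (pTh (pTh Y) t θ) : ℝ))
        = ∫ θ in (0:ℝ)..(2*π), (2 * (inner ℝ (pT Y t θ) (pT (pT Y) t θ) : ℝ)
            + 2 * (inner ℝ (pT Y t θ) (pTh (pTh Y) t θ) : ℝ)) := by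
      rw [intervalIntegral.integral_add i1 i3]; ring
    have hgoal : (∫ θ in (0:ℝ)..(2*π), 2 * (inner ℝ (pT Y t θ) (pT (pT Y) t θ) : ℝ))
        + -(∫ θ in (0:ℝ)..(2*π), 2 * (inner ℝ (pT Y t θ) (pTh (pTh Y) t θ) : ℝ))
        - 2 * -(∫ θ in (0:ℝ)..(2*π), 2 * (inner ℝ (pT Y t θ) (pTh (pTh Y) t θ) : ℝ))
        = (∫ θ in (0:ℝ)..(2*π), 2 * (inner ℝ (pT Y t θ) (pT (pT Y) t θ) : ℝ))
        - -(∫ θ in (0:ℝ)..(2*π), 2 * (inner ℝ (pT Y t θ) (pTh (pTh Y) t θ) : ℝ)) := by ring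
    rw [hgoal, hcomb]
    apply intervalIntegral.integral_congr
    intro θ _
    have hlap : pT (pT Y) t θ + pTh (pTh Y) t θ = -(gradSqEta Y t θ) • Y t θ := hharm t htI θ
    have e1 : 2 * (inner ℝ (pT Y t θ) (pT (pT Y) t θ) : ℝ)
        + 2 * (inner ℝ (pT Y t θ) (pTh (pTh Y) t θ) : ℝ)
        = 2 * (inner ℝ (pT Y t θ) (pT (pT Y) t θ + pTh (pTh Y) t θ) : ℝ) := by
      rw [inner_add_right]; ring
    show 2 * (inner ℝ (pT Y t θ) (pT (pT Y) t θ) : ℝ)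
        + 2 * (inner ℝ (pT Y t θ) (pTh (pTh Y) t θ) : ℝ)
        = (-2) * gradSqEta Y t θ * (inner ℝ (pT Y t θ) (Y t θ) : ℝ)
    rw [e1, hlap, real_inner_smul_right]; ring
  -- nonnegativity of M, G
  have hG0 : (0:ℝ) ≤ G := le_trans (Real.sqrt_nonneg _) (hG t htI 0)
  have hM0 : (0:ℝ) ≤ M := le_trans (norm_nonneg _) (hM t htI 0)
  -- pointwise bound
  have hpoint : ∀ θ : ℝ, |(-2) * gradSqEta Y t θ * (inner ℝ (pT Y t θ) (Y t θ) : ℝ)|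
      ≤ 4 * M * G * ‖pTh Y t θ‖ ^ 2 := by
    intro θ
    have hc := (hconf t htI θ).1
    have hce : gradSqEta Y t θ = 2 * etaM (pTh Y t θ) (pTh Y t θ) := by
      unfold gradSqEta; rw [hc]; ring
    have h1 : |gradSqEta Y t θ| ≤ 2 * ‖pTh Y t θ‖ ^ 2 := by
      rw [hce, abs_mul, abs_two]
      have := Stmt4Aux.abs_etaM_self_le (pTh Y t θ)
      nlinarith
    have huG : ‖pT Y t θ‖ ≤ G := by
      have h2 := hG t htI θ
      have h3 : ‖pT Y t θ‖ = Real.sqrt (‖pT Y t θ‖ ^ 2) := (Real.sqrt_sq (norm_nonneg _)).symm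
      rw [h3]
      refine le_trans (Real.sqrt_le_sqrt ?_) h2
      unfold gradSqXi; nlinarith [sq_nonneg ‖pTh Y t θ‖]
    have h2 : |(inner ℝ (pT Y t θ) (Y t θ) : ℝ)| ≤ G * M := by
      refine le_trans (abs_real_inner_le_norm _ _) ?_
      exact mul_le_mul huG (hM t htI θ) (norm_nonneg _) hG0
    calc |(-2) * gradSqEta Y t θ * (inner ℝ (pT Y t θ) (Y t θ) : ℝ)|
        = 2 * (|gradSqEta Y t θ| * |(inner ℝ (pT Y t θ) (Y t θ) : ℝ)|) := by
          rw [abs_mul, abs_mul]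
          norm_num [abs_of_nonneg]
          ring
      _ ≤ 2 * ((2 * ‖pTh Y t θ‖ ^ 2) * (G * M)) := by
          have hnn : (0:ℝ) ≤ 2 * ‖pTh Y t θ‖ ^ 2 := by positivity
          have := mul_le_mul h1 h2 (abs_nonneg _) hnn
          linarith
      _ = 4 * M * G * ‖pTh Y t θ‖ ^ 2 := by ring
  -- continuity of the integrand W
  have ceta : Continuous fun p : E5 × E5 => etaM p.1 p.2 := by
    unfold etaM
    fun_prop
  have cgrad : Continuous fun θ => gradSqEta Y t θ := by
    unfold gradSqEta
    exact (ceta.comp (su.prodMk su)).add (ceta.comp (sv.prodMk sv))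
  have cW : Continuous fun θ => (-2) * gradSqEta Y t θ * (inner ℝ (pT Y t θ) (Y t θ) : ℝ) :=
    (continuous_const.mul cgrad).mul (su.inner sY)
  -- conclusion
  rw [hW]
  calc |∫ θ in (0:ℝ)..(2*π), (-2) * gradSqEta Y t θ * (inner ℝ (pT Y t θ) (Y t θ) : ℝ)|
      ≤ ∫ θ in (0:ℝ)..(2*π),
          |(-2) * gradSqEta Y t θ * (inner ℝ (pT Y t θ) (Y t θ) : ℝ)| :=
        intervalIntegral.abs_integral_le_integral_abs two_pi_nonneg
    _ ≤ ∫ θ in (0:ℝ)..(2*π), 4 * M * G * ‖pTh Y t θ‖ ^ 2 :=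
        intervalIntegral.integral_mono_on two_pi_nonneg
          (cW.abs.intervalIntegrable _ _)
          ((continuous_const.mul (sv.norm.pow 2)).intervalIntegrable _ _)
          (fun θ _ => hpoint θ)
    _ = 4 * M * G * alphaF Y t := by
        rw [intervalIntegral.integral_const_mul]
        rfl
end
end

section
/- Let T > 0 and let Y : ℝ² → ℝ⁵ be smooth, 2π-periodic in θ, harmonic into de Sitter space and η-conformal on [−T,T] × ℝ, with M := sup_{[−T,T]×ℝ} |Y|_ξ and G := sup_{[−T,T]×ℝ} |∇Y|_ξ both finite. Define α(t) := ∫₀^{2π} |∂_θY(t,θ)|²_ξ dθ, the circle average Y*(t) := (1/2π) ∫₀^{2π} Y(t,θ) dθ, and γ(t) := ∫₀^{2π} (|∂_t(Y − Y*)(t,θ)|²_ξ + |∂_θY(t,θ)|²_ξ) dθ. Then for every t ∈ (−T,T), |γ'(t) − 2α'(t)| ≤ 16 M G α(t). -/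
open Real Set MeasureTheory intervalIntegral Filter

noncomputable section

section Aux
open Function

open scoped RealInnerProductSpace

variable {Z : ℝ → ℝ → E5}

lemma hdA (h : ContDiff ℝ (⊤:ℕ∞) (uncurry Z)) (t θ : ℝ) :
    HasDerivAt (fun s => Z s θ) (fderiv ℝ (uncurry Z) (t, θ) (1, 0)) t := by
  have hd : HasFDerivAt (uncurry Z) (fderiv ℝ (uncurry Z) (t, θ)) (t, θ) :=
    (h.differentiable (by simp) (t, θ)).hasFDerivAt
  have hl : HasDerivAt (fun s : ℝ => ((s, θ) : ℝ × ℝ)) (1, 0) t :=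
    (hasDerivAt_id t).prodMk (hasDerivAt_const t θ)
  exact hd.comp_hasDerivAt t hl

lemma hdB (h : ContDiff ℝ (⊤:ℕ∞) (uncurry Z)) (t θ : ℝ) :
    HasDerivAt (fun s => Z t s) (fderiv ℝ (uncurry Z) (t, θ) (0, 1)) θ := by
  have hd : HasFDerivAt (uncurry Z) (fderiv ℝ (uncurry Z) (t, θ)) (t, θ) :=
    (h.differentiable (by simp) (t, θ)).hasFDerivAt
  have hl : HasDerivAt (fun s : ℝ => ((t, s) : ℝ × ℝ)) (0, 1) θ :=
    (hasDerivAt_const θ t).prodMk (hasDerivAt_id θ)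
  exact hd.comp_hasDerivAt θ hl

lemma pT_eq (h : ContDiff ℝ (⊤:ℕ∞) (uncurry Z)) (t θ : ℝ) :
    pT Z t θ = fderiv ℝ (uncurry Z) (t, θ) (1, 0) := (hdA h t θ).deriv

lemma pTh_eq (h : ContDiff ℝ (⊤:ℕ∞) (uncurry Z)) (t θ : ℝ) :
    pTh Z t θ = fderiv ℝ (uncurry Z) (t, θ) (0, 1) := (hdB h t θ).deriv

lemma hasDerivAt_pT (h : ContDiff ℝ (⊤:ℕ∞) (uncurry Z)) (t θ : ℝ) :
    HasDerivAt (fun s => Z s θ) (pT Z t θ) t := by rw [pT_eq h]; exact hdA h t θ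

lemma hasDerivAt_pTh (h : ContDiff ℝ (⊤:ℕ∞) (uncurry Z)) (t θ : ℝ) :
    HasDerivAt (fun s => Z t s) (pTh Z t θ) θ := by rw [pTh_eq h]; exact hdB h t θ

lemma contDiff_fderiv_apply (h : ContDiff ℝ (⊤:ℕ∞) (uncurry Z)) (v : ℝ × ℝ) :
    ContDiff ℝ (⊤:ℕ∞) (fun p : ℝ × ℝ => fderiv ℝ (uncurry Z) p v) := by
  have h1 : ContDiff ℝ (⊤:ℕ∞) (fderiv ℝ (uncurry Z)) :=
    h.fderiv_right (by exact_mod_cast le_top)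
  exact h1.clm_apply contDiff_const

lemma contDiff_pT (h : ContDiff ℝ (⊤:ℕ∞) (uncurry Z)) :
    ContDiff ℝ (⊤:ℕ∞) (uncurry (pT Z)) := by
  have : uncurry (pT Z) = fun p : ℝ × ℝ => fderiv ℝ (uncurry Z) p (1, 0) := by
    funext p; exact pT_eq h p.1 p.2
  rw [this]; exact contDiff_fderiv_apply h _

lemma contDiff_pTh (h : ContDiff ℝ (⊤:ℕ∞) (uncurry Z)) :
    ContDiff ℝ (⊤:ℕ∞) (uncurry (pTh Z)) := by
  have : uncurry (pTh Z) = fun p : ℝ × ℝ => fderiv ℝ (uncurry Z) p (0, 1) := by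
    funext p; exact pTh_eq h p.1 p.2
  rw [this]; exact contDiff_fderiv_apply h _

lemma clairaut (h : ContDiff ℝ (⊤:ℕ∞) (uncurry Z)) (t θ : ℝ) :
    pTh (pT Z) t θ = pT (pTh Z) t θ := by
  have hsymm : IsSymmSndFDerivAt ℝ (uncurry Z) (t, θ) :=
    h.contDiffAt.isSymmSndFDerivAt
      (by rw [minSmoothness_of_isRCLikeNormedField]; exact WithTop.coe_le_coe.mpr le_top)
  have h1 : ContDiff ℝ (⊤:ℕ∞) (fderiv ℝ (uncurry Z)) :=
    h.fderiv_right (by exact_mod_cast le_top)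
  have key : ∀ v w : ℝ × ℝ,
      fderiv ℝ (fun p : ℝ × ℝ => fderiv ℝ (uncurry Z) p v) (t, θ) w
        = fderiv ℝ (fderiv ℝ (uncurry Z)) (t, θ) w v := by
    intro v w
    have hF : HasFDerivAt (fderiv ℝ (uncurry Z))
        (fderiv ℝ (fderiv ℝ (uncurry Z)) (t, θ)) (t, θ) :=
      ((h1.differentiable (by simp)) (t, θ)).hasFDerivAt
    have h3 := ((ContinuousLinearMap.apply ℝ E5 v).hasFDerivAt.comp (t, θ) hF)
    have h2 := h3.fderiv
    have hcomp : (fun p : ℝ×ℝ => fderiv ℝ (uncurry Z) p v)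
        = (⇑((ContinuousLinearMap.apply ℝ E5) v) ∘ fderiv ℝ (uncurry Z)) := rfl
    rw [hcomp, h2]
    rfl
  have e1 : pTh (pT Z) t θ
      = fderiv ℝ (fderiv ℝ (uncurry Z)) (t, θ) (0, 1) (1, 0) := by
    rw [pTh_eq (contDiff_pT h) t θ]
    have : uncurry (pT Z) = fun p : ℝ × ℝ => fderiv ℝ (uncurry Z) p (1, 0) := by
      funext p; exact pT_eq h p.1 p.2
    rw [this, key (1,0) (0,1)]
  have e2 : pT (pTh Z) t θ
      = fderiv ℝ (fderiv ℝ (uncurry Z)) (t, θ) (1, 0) (0, 1) := by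
    rw [pT_eq (contDiff_pTh h) t θ]
    have : uncurry (pTh Z) = fun p : ℝ × ℝ => fderiv ℝ (uncurry Z) p (0, 1) := by
      funext p; exact pTh_eq h p.1 p.2
    rw [this, key (0,1) (1,0)]
  rw [e1, e2, hsymm.eq]

lemma hasDerivAt_param {E : Type*} [NormedAddCommGroup E] [NormedSpace ℝ E]
    {F F' : ℝ → ℝ → E} (a b x₀ : ℝ)
    (hF : Continuous (uncurry F)) (hF' : Continuous (uncurry F'))
    (hd : ∀ x t : ℝ, HasDerivAt (fun y => F y t) (F' x t) x) :
    HasDerivAt (fun x => ∫ t in a..b, F x t) (∫ t in a..b, F' x₀ t) x₀ := by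
  obtain ⟨C, hC⟩ := (isCompact_Icc.prod isCompact_uIcc).exists_bound_of_continuousOn
    (s := Icc (x₀ - 1) (x₀ + 1) ×ˢ uIcc a b) hF'.continuousOn
  have cont1 : ∀ x : ℝ, Continuous (F x) := fun x =>
    hF.comp (continuous_const.prodMk continuous_id)
  have cont1' : ∀ x : ℝ, Continuous (F' x) := fun x =>
    hF'.comp (continuous_const.prodMk continuous_id)
  refine (intervalIntegral.hasDerivAt_integral_of_dominated_loc_of_deriv_le
    (F := F) (F' := F') (bound := fun _ => C) (s := Metric.ball x₀ 1) (Metric.ball_mem_nhds x₀ one_pos)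
    (Eventually.of_forall fun x => (cont1 x).aestronglyMeasurable)
    ((cont1 x₀).intervalIntegrable _ _)
    (cont1' x₀).aestronglyMeasurable
    (Eventually.of_forall ?_)
    (intervalIntegrable_const)
    (Eventually.of_forall fun t _ x _ => hd x t)).2
  intro t ht x hx
  have hx' : x ∈ Icc (x₀ - 1) (x₀ + 1) := by
    rw [Metric.mem_ball, Real.dist_eq, abs_lt] at hx
    constructor <;> linarith [hx.1, hx.2]
  exact hC (x, t) ⟨hx', uIoc_subset_uIcc ht⟩

lemma deriv_periodic {f : ℝ → E5} {p : ℝ} (hf : ∀ x, f (x + p) = f x) (x : ℝ) :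
    deriv f (x + p) = deriv f x := by
  rw [← deriv_comp_add_const]
  simp only [hf]

lemma abs_etaM_le (v : E5) : |etaM v v| ≤ ‖v‖ ^ 2 := by
  have h : ‖v‖ ^ 2 = v 0 ^ 2 + v 1 ^ 2 + v 2 ^ 2 + v 3 ^ 2 + v 4 ^ 2 := by
    rw [EuclideanSpace.norm_eq, Real.sq_sqrt (by positivity)]
    simp [Fin.sum_univ_five, Real.norm_eq_abs, sq_abs]
  rw [h, abs_le]
  simp only [etaM]
  constructor <;> nlinarith [sq_nonneg (v 0), sq_nonneg (v 1), sq_nonneg (v 2),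
    sq_nonneg (v 3), sq_nonneg (v 4)]

end Aux

open scoped RealInnerProductSpace

set_option maxHeartbeats 1000000

/-- For a conformal harmonic map into de Sitter space, bounded by `M` with gradient bounded
by `G`, one has `|γ'(t) − 2α'(t)| ≤ 16 M G α(t)`. -/
theorem stmt5 (T M G : ℝ) (hT : 0 < T) (Y : ℝ → ℝ → E5)
    (hsm : ContDiff ℝ (⊤ : ℕ∞) (Function.uncurry Y))
    (hper : Periodic2pi Y)
    (hharm : HarmonicDS Y (Icc (-T) T))
    (hconf : ConformalEta Y (Icc (-T) T))
    (hM : ∀ t ∈ Icc (-T) T, ∀ θ : ℝ, ‖Y t θ‖ ≤ M)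
    (hG : ∀ t ∈ Icc (-T) T, ∀ θ : ℝ, Real.sqrt (gradSqXi Y t θ) ≤ G) :
    ∀ t ∈ Ioo (-T) T,
      |deriv (gammaF Y) t - 2 * deriv (alphaF Y) t| ≤ 16 * M * G * alphaF Y t :=
  by
  classical
  intro t ht
  have hsT := contDiff_pT hsm
  have hsTh := contDiff_pTh hsm
  have hsTT := contDiff_pT hsT
  have hsTTh := contDiff_pT hsTh
  have hsThTh := contDiff_pTh hsTh
  have hsThT := contDiff_pTh hsT
  have hsTTT := contDiff_pT hsTT
  -- continuity in θ at a fixed time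
  have cth : ∀ {W : ℝ → ℝ → E5}, ContDiff ℝ (⊤:ℕ∞) (Function.uncurry W) →
      ∀ x : ℝ, Continuous (fun θ => W x θ) := fun hW x =>
    hW.continuous.comp (continuous_const.prodMk continuous_id)
  have ct1 : Continuous (fun θ => pT Y t θ) := cth hsT t
  have ct2 : Continuous (fun θ => pTh Y t θ) := cth hsTh t
  have ct3 : Continuous (fun θ => pT (pT Y) t θ) := cth hsTT t
  have ct4 : Continuous (fun θ => pT (pTh Y) t θ) := cth hsTTh t
  have ct5 : Continuous (fun θ => pTh (pTh Y) t θ) := cth hsThTh t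
  have ct6 : Continuous (fun θ => pTh (pT Y) t θ) := cth hsThT t
  have ctY : Continuous (fun θ => Y t θ) := cth hsm t
  set c : ℝ → E5 := fun x => (2 * π)⁻¹ • ∫ θ in (0:ℝ)..(2*π), pT Y x θ with hc_def
  set c' : ℝ → E5 := fun x => (2 * π)⁻¹ • ∫ θ in (0:ℝ)..(2*π), pT (pT Y) x θ with hc'_def
  have hpi : (0:ℝ) < 2 * π := by positivity
  -- derivative of Ystar
  have hYstarD : ∀ x : ℝ, HasDerivAt (Ystar Y) (c x) x := by
    intro x
    have h1 : HasDerivAt (fun s => ∫ θ in (0:ℝ)..(2*π), Y s θ)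
        (∫ θ in (0:ℝ)..(2*π), pT Y x θ) x :=
      hasDerivAt_param _ _ _ hsm.continuous hsT.continuous
        (fun y θ => hasDerivAt_pT hsm y θ)
    unfold Ystar
    exact h1.fun_const_smul _
  have hYstar_deriv : deriv (Ystar Y) = c := funext fun x => (hYstarD x).deriv
  have hcD : ∀ x : ℝ, HasDerivAt c (c' x) x := by
    intro x
    exact (hasDerivAt_param _ _ _ hsT.continuous hsTT.continuous
      (fun y θ => hasDerivAt_pT hsT y θ)).fun_const_smul _
  have hc'D : ∀ x : ℝ, HasDerivAt c'
      ((2 * π)⁻¹ • ∫ θ in (0:ℝ)..(2*π), pT (pT (pT Y)) x θ) x := by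
    intro x
    exact (hasDerivAt_param _ _ _ hsTT.continuous hsTTT.continuous
      (fun y θ => hasDerivAt_pT hsTT y θ)).fun_const_smul _
  have hc_diff : Differentiable ℝ c := fun x => (hcD x).differentiableAt
  have hc_cont : Continuous c := hc_diff.continuous
  have hc'_diff : Differentiable ℝ c' := fun x => (hc'D x).differentiableAt
  have hc'_cont : Continuous c' := hc'_diff.continuous
  -- derivative of alphaF
  have halphaD : HasDerivAt (alphaF Y)
      (∫ θ in (0:ℝ)..(2*π),
        (⟪pTh Y t θ, pT (pTh Y) t θ⟫ + ⟪pT (pTh Y) t θ, pTh Y t θ⟫)) t := by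
    have heq : alphaF Y = fun x => ∫ θ in (0:ℝ)..(2*π), ⟪pTh Y x θ, pTh Y x θ⟫ := by
      funext x
      simp only [alphaF]
      exact intervalIntegral.integral_congr fun θ _ => (real_inner_self_eq_norm_sq _).symm
    rw [heq]
    refine hasDerivAt_param (F := fun x θ => ⟪pTh Y x θ, pTh Y x θ⟫)
      (F' := fun x θ => ⟪pTh Y x θ, pT (pTh Y) x θ⟫ + ⟪pT (pTh Y) x θ, pTh Y x θ⟫)
      _ _ _ ?_ ?_ (fun x θ => ?_)
    · show Continuous fun p : ℝ × ℝ =>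
        ⟪Function.uncurry (pTh Y) p, Function.uncurry (pTh Y) p⟫
      exact hsTh.continuous.inner hsTh.continuous
    · show Continuous fun p : ℝ × ℝ =>
        (⟪Function.uncurry (pTh Y) p, Function.uncurry (pT (pTh Y)) p⟫
          + ⟪Function.uncurry (pT (pTh Y)) p, Function.uncurry (pTh Y) p⟫)
      exact (hsTh.continuous.inner hsTTh.continuous).add
        (hsTTh.continuous.inner hsTh.continuous)
    · exact (hasDerivAt_pT hsTh x θ).inner ℝ (hasDerivAt_pT hsTh x θ)
  -- derivative of gammaF
  have hgammaD : HasDerivAt (gammaF Y)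
      (∫ θ in (0:ℝ)..(2*π),
        ((⟪pT Y t θ - c t, pT (pT Y) t θ - c' t⟫
          + ⟪pT (pT Y) t θ - c' t, pT Y t θ - c t⟫)
          + (⟪pTh Y t θ, pT (pTh Y) t θ⟫ + ⟪pT (pTh Y) t θ, pTh Y t θ⟫))) t := by
    have heq : gammaF Y = fun x => ∫ θ in (0:ℝ)..(2*π),
        (⟪pT Y x θ - c x, pT Y x θ - c x⟫ + ⟪pTh Y x θ, pTh Y x θ⟫) := by
      funext x
      refine intervalIntegral.integral_congr fun θ _ => ?_
      rw [hYstar_deriv, ← real_inner_self_eq_norm_sq, ← real_inner_self_eq_norm_sq]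
    rw [heq]
    refine hasDerivAt_param
      (F := fun x θ => ⟪pT Y x θ - c x, pT Y x θ - c x⟫ + ⟪pTh Y x θ, pTh Y x θ⟫)
      (F' := fun x θ => (⟪pT Y x θ - c x, pT (pT Y) x θ - c' x⟫
          + ⟪pT (pT Y) x θ - c' x, pT Y x θ - c x⟫)
          + (⟪pTh Y x θ, pT (pTh Y) x θ⟫ + ⟪pT (pTh Y) x θ, pTh Y x θ⟫))
      _ _ _ ?_ ?_ (fun x θ => ?_)
    · show Continuous fun p : ℝ × ℝ =>
        (⟪Function.uncurry (pT Y) p - c p.1, Function.uncurry (pT Y) p - c p.1⟫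
          + ⟪Function.uncurry (pTh Y) p, Function.uncurry (pTh Y) p⟫)
      have h1 : Continuous fun p : ℝ × ℝ => Function.uncurry (pT Y) p - c p.1 :=
        hsT.continuous.sub (hc_cont.comp continuous_fst)
      exact (h1.inner h1).add (hsTh.continuous.inner hsTh.continuous)
    · show Continuous fun p : ℝ × ℝ =>
        ((⟪Function.uncurry (pT Y) p - c p.1, Function.uncurry (pT (pT Y)) p - c' p.1⟫
          + ⟪Function.uncurry (pT (pT Y)) p - c' p.1, Function.uncurry (pT Y) p - c p.1⟫)
          + (⟪Function.uncurry (pTh Y) p, Function.uncurry (pT (pTh Y)) p⟫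
            + ⟪Function.uncurry (pT (pTh Y)) p, Function.uncurry (pTh Y) p⟫))
      have h1 : Continuous fun p : ℝ × ℝ => Function.uncurry (pT Y) p - c p.1 :=
        hsT.continuous.sub (hc_cont.comp continuous_fst)
      have h2 : Continuous fun p : ℝ × ℝ => Function.uncurry (pT (pT Y)) p - c' p.1 :=
        hsTT.continuous.sub (hc'_cont.comp continuous_fst)
      exact ((h1.inner h2).add (h2.inner h1)).add
        ((hsTh.continuous.inner hsTTh.continuous).add (hsTTh.continuous.inner hsTh.continuous))
    · exact (((hasDerivAt_pT hsT x θ).sub (hcD x)).inner ℝ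
        ((hasDerivAt_pT hsT x θ).sub (hcD x))).add
        ((hasDerivAt_pT hsTh x θ).inner ℝ (hasDerivAt_pT hsTh x θ))
  have htIcc : t ∈ Icc (-T) T := Ioo_subset_Icc_self ht
  have ca : Continuous (fun θ => pT Y t θ - c t) := ct1.sub continuous_const
  -- continuity of gradSqEta in θ
  have cproj : ∀ i : Fin 5, Continuous (fun v : E5 => v i) := fun i => by fun_prop
  have cEta : ∀ {f g : ℝ → E5}, Continuous f → Continuous g →
      Continuous (fun θ => etaM (f θ) (g θ)) := by
    intro f g hf hg
    simp only [etaM]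
    have m0 : Continuous (fun θ => f θ 0 * g θ 0) :=
      ((cproj 0).comp hf).mul ((cproj 0).comp hg)
    have m1 : Continuous (fun θ => f θ 1 * g θ 1) :=
      ((cproj 1).comp hf).mul ((cproj 1).comp hg)
    have m2 : Continuous (fun θ => f θ 2 * g θ 2) :=
      ((cproj 2).comp hf).mul ((cproj 2).comp hg)
    have m3 : Continuous (fun θ => f θ 3 * g θ 3) :=
      ((cproj 3).comp hf).mul ((cproj 3).comp hg)
    have m4 : Continuous (fun θ => f θ 4 * g θ 4) :=
      ((cproj 4).comp hf).mul ((cproj 4).comp hg)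
    exact (((m0.add m1).add m2).add m3).sub m4
  have cq : Continuous (fun θ => -(gradSqEta Y t θ) * ⟪pT Y t θ - c t, Y t θ⟫) := by
    have h1 : Continuous (fun θ => gradSqEta Y t θ) := by
      simp only [gradSqEta]
      exact (cEta ct1 ct1).add (cEta ct2 ct2)
    exact h1.neg.mul (ca.inner ctY)
  have int1 : IntervalIntegrable (fun θ => ⟪pT Y t θ - c t, pT (pT Y) t θ⟫)
      volume 0 (2*π) := (ca.inner ct3).intervalIntegrable _ _
  have int2 : IntervalIntegrable (fun θ => ⟪pT Y t θ - c t, c' t⟫)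
      volume 0 (2*π) := (ca.inner continuous_const).intervalIntegrable _ _
  have int3 : IntervalIntegrable (fun θ => ⟪pT (pTh Y) t θ, pTh Y t θ⟫)
      volume 0 (2*π) := (ct4.inner ct2).intervalIntegrable _ _
  have int4 : IntervalIntegrable (fun θ => ⟪pT Y t θ - c t, pTh (pTh Y) t θ⟫)
      volume 0 (2*π) := (ca.inner ct5).intervalIntegrable _ _
  -- (C1): expression for γ' - 2α'
  have hD1 : deriv (gammaF Y) t - 2 * deriv (alphaF Y) t
      = 2 * ((∫ θ in (0:ℝ)..(2*π), ⟪pT Y t θ - c t, pT (pT Y) t θ⟫)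
        - (∫ θ in (0:ℝ)..(2*π), ⟪pT Y t θ - c t, c' t⟫)
        - (∫ θ in (0:ℝ)..(2*π), ⟪pT (pTh Y) t θ, pTh Y t θ⟫)) := by
    rw [hgammaD.deriv, halphaD.deriv]
    have egam : (∫ θ in (0:ℝ)..(2*π),
        ((⟪pT Y t θ - c t, pT (pT Y) t θ - c' t⟫
          + ⟪pT (pT Y) t θ - c' t, pT Y t θ - c t⟫)
          + (⟪pTh Y t θ, pT (pTh Y) t θ⟫ + ⟪pT (pTh Y) t θ, pTh Y t θ⟫)))
        = ∫ θ in (0:ℝ)..(2*π),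
          ((2 * ⟪pT Y t θ - c t, pT (pT Y) t θ⟫ - 2 * ⟪pT Y t θ - c t, c' t⟫)
            + 2 * ⟪pT (pTh Y) t θ, pTh Y t θ⟫) := by
      refine intervalIntegral.integral_congr fun θ _ => ?_
      simp only [inner_sub_left, inner_sub_right,
        real_inner_comm (pT (pT Y) t θ) (pT Y t θ), real_inner_comm (c' t) (pT Y t θ),
        real_inner_comm (pT (pT Y) t θ) (c t), real_inner_comm (c' t) (c t),
        real_inner_comm (pTh Y t θ) (pT (pTh Y) t θ)]
      ring
    have ealp : (∫ θ in (0:ℝ)..(2*π),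
        (⟪pTh Y t θ, pT (pTh Y) t θ⟫ + ⟪pT (pTh Y) t θ, pTh Y t θ⟫))
        = ∫ θ in (0:ℝ)..(2*π), 2 * ⟪pT (pTh Y) t θ, pTh Y t θ⟫ := by
      refine intervalIntegral.integral_congr fun θ _ => ?_
      rw [real_inner_comm (pTh Y t θ) (pT (pTh Y) t θ)]; ring
    rw [egam, ealp,
      intervalIntegral.integral_add ((int1.const_mul 2).sub (int2.const_mul 2))
        (int3.const_mul 2),
      intervalIntegral.integral_sub (int1.const_mul 2) (int2.const_mul 2),
      intervalIntegral.integral_const_mul, intervalIntegral.integral_const_mul,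
      intervalIntegral.integral_const_mul]
    ring
  -- (C2): I2 = 0
  have hintA : (∫ θ in (0:ℝ)..(2*π), (pT Y t θ - c t)) = 0 := by
    rw [intervalIntegral.integral_sub (ct1.intervalIntegrable _ _) intervalIntegrable_const,
      intervalIntegral.integral_const]
    have hv : (2*π - 0) • c t = ∫ θ in (0:ℝ)..(2*π), pT Y t θ := by
      simp only [hc_def]
      rw [smul_smul, show (2*π - 0) * (2*π)⁻¹ = 1 by rw [sub_zero]; field_simp, one_smul]
    rw [hv, sub_self]
  have hI2 : (∫ θ in (0:ℝ)..(2*π), ⟪pT Y t θ - c t, c' t⟫) = 0 := by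
    have hcomm : (∫ θ in (0:ℝ)..(2*π), ⟪pT Y t θ - c t, c' t⟫)
        = ∫ θ in (0:ℝ)..(2*π), (innerSL ℝ (c' t)) (pT Y t θ - c t) := by
      refine intervalIntegral.integral_congr fun θ _ => ?_
      rw [innerSL_apply_apply]; exact real_inner_comm _ _
    rw [hcomm, (innerSL ℝ (c' t)).intervalIntegral_comp_comm (ca.intervalIntegrable _ _),
      hintA]
    simp
  -- (C3): integration by parts in θ using periodicity
  have hper1 : ∀ θ : ℝ, pT Y t (θ + 2*π) = pT Y t θ := by
    intro θ; simp only [pT]; congr 1; funext s; exact hper s θ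
  have hper2 : ∀ θ : ℝ, pTh Y t (θ + 2*π) = pTh Y t θ := fun θ =>
    deriv_periodic (fun x => hper t x) θ
  have hkey : (∫ θ in (0:ℝ)..(2*π),
      (⟪pT Y t θ - c t, pTh (pTh Y) t θ⟫ + ⟪pTh (pT Y) t θ, pTh Y t θ⟫)) = 0 := by
    have hder : ∀ θ ∈ uIcc (0:ℝ) (2*π),
        HasDerivAt (fun σ => ⟪pT Y t σ - c t, pTh Y t σ⟫)
          (⟪pT Y t θ - c t, pTh (pTh Y) t θ⟫ + ⟪pTh (pT Y) t θ, pTh Y t θ⟫) θ :=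
      fun θ _ => ((hasDerivAt_pTh hsT t θ).sub_const (c t)).inner ℝ (hasDerivAt_pTh hsTh t θ)
    rw [intervalIntegral.integral_eq_sub_of_hasDerivAt hder
      (((ca.inner ct5).add (ct6.inner ct2)).intervalIntegrable _ _)]
    have h1 : pT Y t (2*π) = pT Y t 0 := by simpa using hper1 0
    have h2 : pTh Y t (2*π) = pTh Y t 0 := by simpa using hper2 0
    rw [h1, h2, sub_self]
  have hI3 : (∫ θ in (0:ℝ)..(2*π), ⟪pT (pTh Y) t θ, pTh Y t θ⟫)
      = - ∫ θ in (0:ℝ)..(2*π), ⟪pT Y t θ - c t, pTh (pTh Y) t θ⟫ := by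
    rw [intervalIntegral.integral_add int4 ((ct6.inner ct2).intervalIntegrable _ _)] at hkey
    have hins : (∫ θ in (0:ℝ)..(2*π), ⟪pTh (pT Y) t θ, pTh Y t θ⟫)
        = ∫ θ in (0:ℝ)..(2*π), ⟪pT (pTh Y) t θ, pTh Y t θ⟫ := by
      refine intervalIntegral.integral_congr fun θ _ => ?_
      rw [clairaut hsm]
    rw [hins] at hkey
    linarith
  -- (C4): use the harmonic map equation
  have hI14 : (∫ θ in (0:ℝ)..(2*π), ⟪pT Y t θ - c t, pT (pT Y) t θ⟫)
      + (∫ θ in (0:ℝ)..(2*π), ⟪pT Y t θ - c t, pTh (pTh Y) t θ⟫)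
      = ∫ θ in (0:ℝ)..(2*π), -(gradSqEta Y t θ) * ⟪pT Y t θ - c t, Y t θ⟫ := by
    rw [← intervalIntegral.integral_add int1 int4]
    refine intervalIntegral.integral_congr fun θ _ => ?_
    rw [← inner_add_right]
    have hl := hharm t htIcc θ
    simp only [lapY] at hl
    rw [hl, real_inner_smul_right]
  have hD2 : deriv (gammaF Y) t - 2 * deriv (alphaF Y) t
      = 2 * ∫ θ in (0:ℝ)..(2*π), -(gradSqEta Y t θ) * ⟪pT Y t θ - c t, Y t θ⟫ := by
    rw [hD1, hI2, hI3, ← hI14]; ring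
  -- bounds
  have hG0 : 0 ≤ G := le_trans (Real.sqrt_nonneg _) (hG t htIcc 0)
  have hM0 : 0 ≤ M := le_trans (norm_nonneg _) (hM t htIcc 0)
  have hpT_le : ∀ θ : ℝ, ‖pT Y t θ‖ ≤ G := by
    intro θ
    refine le_trans ?_ (hG t htIcc θ)
    rw [show gradSqXi Y t θ = ‖pT Y t θ‖^2 + ‖pTh Y t θ‖^2 from rfl]
    calc ‖pT Y t θ‖ = Real.sqrt (‖pT Y t θ‖^2) := (Real.sqrt_sq (norm_nonneg _)).symm
      _ ≤ _ := Real.sqrt_le_sqrt (by nlinarith [sq_nonneg ‖pTh Y t θ‖])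
  have hc_le : ‖c t‖ ≤ G := by
    have hb : ‖∫ θ in (0:ℝ)..(2*π), pT Y t θ‖ ≤ G * |2*π - 0| :=
      intervalIntegral.norm_integral_le_of_norm_le_const fun x _ => hpT_le x
    have h3 : |2*π - 0| = 2*π := by rw [sub_zero]; exact abs_of_pos hpi
    simp only [hc_def]
    rw [norm_smul, Real.norm_eq_abs, abs_of_pos (by positivity : (0:ℝ) < (2*π)⁻¹)]
    calc (2*π)⁻¹ * ‖∫ θ in (0:ℝ)..(2*π), pT Y t θ‖
        ≤ (2*π)⁻¹ * (G * |2*π - 0|) := by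
          exact mul_le_mul_of_nonneg_left hb (by positivity)
      _ = G := by rw [h3]; field_simp
  have hptw : ∀ θ : ℝ, |(-(gradSqEta Y t θ)) * ⟪pT Y t θ - c t, Y t θ⟫|
      ≤ 4 * (M * G) * ‖pTh Y t θ‖^2 := by
    intro θ
    have hcf := (hconf t htIcc θ).1
    have h0 := abs_etaM_le (pTh Y t θ)
    have he : |gradSqEta Y t θ| ≤ 2 * ‖pTh Y t θ‖^2 := by
      rw [show gradSqEta Y t θ
        = etaM (pT Y t θ) (pT Y t θ) + etaM (pTh Y t θ) (pTh Y t θ) from rfl, hcf]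
      calc |etaM (pTh Y t θ) (pTh Y t θ) + etaM (pTh Y t θ) (pTh Y t θ)|
          ≤ |etaM (pTh Y t θ) (pTh Y t θ)| + |etaM (pTh Y t θ) (pTh Y t θ)| := abs_add_le _ _
        _ ≤ _ := by linarith
    have hi : |⟪pT Y t θ - c t, Y t θ⟫| ≤ 2 * G * M := by
      have h1 := abs_real_inner_le_norm (pT Y t θ - c t) (Y t θ)
      have h2 : ‖pT Y t θ - c t‖ ≤ 2 * G :=
        le_trans (norm_sub_le _ _) (by linarith [hpT_le θ, hc_le])
      have h3 := hM t htIcc θ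
      have h4 := norm_nonneg (pT Y t θ - c t)
      have h5 := norm_nonneg (Y t θ)
      nlinarith
    rw [abs_mul, abs_neg]
    have hmm := mul_le_mul he hi (abs_nonneg _) (by positivity)
    nlinarith [sq_nonneg ‖pTh Y t θ‖, abs_nonneg (gradSqEta Y t θ),
      abs_nonneg (⟪pT Y t θ - c t, Y t θ⟫)]
  have halpha0 : 0 ≤ alphaF Y t :=
    intervalIntegral.integral_nonneg (le_of_lt hpi) (fun u _ => by positivity)
  have hQb : |∫ θ in (0:ℝ)..(2*π), -(gradSqEta Y t θ) * ⟪pT Y t θ - c t, Y t θ⟫|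
      ≤ 4 * (M * G) * alphaF Y t := by
    calc |∫ θ in (0:ℝ)..(2*π), -(gradSqEta Y t θ) * ⟪pT Y t θ - c t, Y t θ⟫|
        ≤ ∫ θ in (0:ℝ)..(2*π), |(-(gradSqEta Y t θ)) * ⟪pT Y t θ - c t, Y t θ⟫| :=
          intervalIntegral.abs_integral_le_integral_abs (le_of_lt hpi)
      _ ≤ ∫ θ in (0:ℝ)..(2*π), 4 * (M * G) * ‖pTh Y t θ‖^2 :=
          intervalIntegral.integral_mono_on (le_of_lt hpi)
            (cq.abs.intervalIntegrable _ _)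
            ((continuous_const.mul ((ct2.norm).pow 2)).intervalIntegrable _ _)
            (fun θ _ => hptw θ)
      _ = 4 * (M * G) * alphaF Y t := by
          rw [intervalIntegral.integral_const_mul]; rfl
  rw [hD2, abs_mul, abs_two]
  calc 2 * |∫ θ in (0:ℝ)..(2*π), -(gradSqEta Y t θ) * ⟪pT Y t θ - c t, Y t θ⟫|
      ≤ 2 * (4 * (M * G) * alphaF Y t) := by linarith
    _ ≤ 16 * M * G * alphaF Y t := by
        nlinarith [mul_nonneg (mul_nonneg hM0 hG0) halpha0]
end
end

section
/- Let μ > 0. There exists L > 4π such that for every ℓ ≥ L and every Lebesgue-integrable function α : [0,ℓ] → [0,∞) satisfying ∫_{2π}^{ℓ−2π} α(s) ds ≥ μ/2 and ∫_{[0,2π] ∪ [ℓ−2π,ℓ]} α(s) ds ≤ 10^{−1000} μ, one has ∫_1^{ℓ−1} α(s) [ (4π³/ℓ²) cos²(πs/ℓ) − sin²(πs/ℓ) ] ds < −π³ μ / (2ℓ²). -/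
set_option maxHeartbeats 1000000


open Real Set MeasureTheory intervalIntegral

/-- For `μ > 0` there is `L > 4π` such that for every `ℓ ≥ L` and every integrable
`α : [0,ℓ] → [0,∞)` carrying at least `μ/2` of mass on `[2π, ℓ−2π]` and at most
`10⁻¹⁰⁰⁰ μ` of mass near the two boundary pieces, one has
`∫₁^{ℓ−1} α(s) [(4π³/ℓ²) cos²(πs/ℓ) − sin²(πs/ℓ)] ds < −π³μ/(2ℓ²)`. -/
theorem stmt11 (μ : ℝ) (hμ : 0 < μ) :
    ∃ L : ℝ, 4 * π < L ∧ ∀ ℓ : ℝ, L ≤ ℓ → ∀ α : ℝ → ℝ,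
      IntegrableOn α (Icc 0 ℓ) →
      (∀ s ∈ Icc 0 ℓ, 0 ≤ α s) →
      μ / 2 ≤ (∫ s in (2 * π)..(ℓ - 2 * π), α s) →
      (∫ s in Icc (0:ℝ) (2 * π) ∪ Icc (ℓ - 2 * π) ℓ, α s) ≤ μ / 10 ^ 1000 →
      (∫ s in (1:ℝ)..(ℓ - 1),
          α s * ((4 * π ^ 3 / ℓ ^ 2) * Real.cos (π * s / ℓ) ^ 2
            - Real.sin (π * s / ℓ) ^ 2))
        < -(π ^ 3 * μ) / (2 * ℓ ^ 2) := by
  have hπl : (3.141592 : ℝ) < π := Real.pi_gt_d6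
  have hπu : π < 3.141593 := Real.pi_lt_d6
  have hπ : (0:ℝ) < π := Real.pi_pos
  refine ⟨13, by nlinarith, ?_⟩
  intro ℓ hℓ α hα hα0 hmidmass hbdry
  have hℓ0 : (0:ℝ) < ℓ := by linarith
  have hℓ2 : (0:ℝ) < ℓ ^ 2 := by positivity
  set h : ℝ → ℝ := fun s =>
    (4 * π ^ 3 / ℓ ^ 2) * Real.cos (π * s / ℓ) ^ 2 - Real.sin (π * s / ℓ) ^ 2 with hh
  have h12π : (1:ℝ) ≤ 2 * π := by nlinarith
  have h2π : 2 * π ≤ ℓ - 2 * π := by linarith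
  have hℓ1 : ℓ - 2 * π ≤ ℓ - 1 := by linarith
  have hc1 : (0:ℝ) ≤ 4 * π ^ 3 / ℓ ^ 2 := by positivity
  -- integrability of α * h on Icc 0 ℓ
  have hcont : Continuous h := by
    apply Continuous.sub
    · exact continuous_const.mul (((Real.continuous_cos.comp
        ((continuous_const.mul continuous_id).div_const ℓ)).pow 2))
    · exact (Real.continuous_sin.comp
        ((continuous_const.mul continuous_id).div_const ℓ)).pow 2
  have hbd : ∀ s, ‖h s‖ ≤ 4 * π ^ 3 / ℓ ^ 2 + 1 := by
    intro s
    rw [Real.norm_eq_abs, abs_le]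
    have h1 : Real.cos (π * s / ℓ) ^ 2 ≤ 1 := Real.cos_sq_le_one _
    have h2 : Real.sin (π * s / ℓ) ^ 2 ≤ 1 := Real.sin_sq_le_one _
    have h3 : (0:ℝ) ≤ Real.cos (π * s / ℓ) ^ 2 := sq_nonneg _
    have h4 : (0:ℝ) ≤ Real.sin (π * s / ℓ) ^ 2 := sq_nonneg _
    constructor <;> simp only [hh] <;> nlinarith
  have hαh : IntegrableOn (fun s => α s * h s) (Icc 0 ℓ) := by
    have := hα.bdd_mul (hcont.aestronglyMeasurable.restrict)
      (Filter.Eventually.of_forall fun x => hbd x)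
    exact this.congr (Filter.Eventually.of_forall fun x => mul_comm _ _)
  -- interval integrability helper
  have hII : ∀ f : ℝ → ℝ, IntegrableOn f (Icc 0 ℓ) → ∀ a b : ℝ,
      0 ≤ a → a ≤ ℓ → 0 ≤ b → b ≤ ℓ → IntervalIntegrable f volume a b := by
    intro f hf a b ha ha' hb hb'
    exact (hf.mono_set (uIcc_subset_Icc ⟨ha, ha'⟩ ⟨hb, hb'⟩)).intervalIntegrable
  have i1 : IntervalIntegrable (fun s => α s * h s) volume 1 (2 * π) :=
    hII _ hαh 1 (2 * π) (by norm_num) (by linarith) (by linarith) (by linarith)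
  have i2 : IntervalIntegrable (fun s => α s * h s) volume (2 * π) (ℓ - 2 * π) :=
    hII _ hαh _ _ (by linarith) (by linarith) (by linarith) (by linarith)
  have i3 : IntervalIntegrable (fun s => α s * h s) volume (ℓ - 2 * π) (ℓ - 1) :=
    hII _ hαh _ _ (by linarith) (by linarith) (by linarith) (by linarith)
  have iα1 : IntervalIntegrable α volume 1 (2 * π) :=
    hII _ hα 1 (2 * π) (by norm_num) (by linarith) (by linarith) (by linarith)
  have iα2 : IntervalIntegrable α volume (2 * π) (ℓ - 2 * π) :=
    hII _ hα _ _ (by linarith) (by linarith) (by linarith) (by linarith)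
  have iα3 : IntervalIntegrable α volume (ℓ - 2 * π) (ℓ - 1) :=
    hII _ hα _ _ (by linarith) (by linarith) (by linarith) (by linarith)
  -- split the integral
  have hsplit : (∫ s in (1:ℝ)..(ℓ - 1), α s * h s)
      = (∫ s in (1:ℝ)..(2 * π), α s * h s)
        + (∫ s in (2 * π)..(ℓ - 2 * π), α s * h s)
        + (∫ s in (ℓ - 2 * π)..(ℓ - 1), α s * h s) := by
    rw [integral_add_adjacent_intervals i1 i2,
      integral_add_adjacent_intervals (i1.trans i2) i3]
  -- α is nonnegative a.e. on the union
  have hunion_sub : Icc (0:ℝ) (2 * π) ∪ Icc (ℓ - 2 * π) ℓ ⊆ Icc 0 ℓ := by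
    rintro x (hx | hx)
    · exact ⟨hx.1, by linarith [hx.2]⟩
    · exact ⟨by linarith [hx.1], hx.2⟩
  have hαu : IntegrableOn α (Icc (0:ℝ) (2 * π) ∪ Icc (ℓ - 2 * π) ℓ) :=
    hα.mono_set hunion_sub
  have hαu0 : 0 ≤ᵐ[volume.restrict (Icc (0:ℝ) (2 * π) ∪ Icc (ℓ - 2 * π) ℓ)] α := by
    refine (ae_restrict_iff' ((measurableSet_Icc).union measurableSet_Icc)).2 ?_
    exact Filter.Eventually.of_forall fun x hx => hα0 x (hunion_sub hx)
  -- boundary pieces of α have small mass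
  have hbound : ∀ a b : ℝ, a ≤ b →
      Ioc a b ⊆ Icc (0:ℝ) (2 * π) ∪ Icc (ℓ - 2 * π) ℓ →
      (∫ s in a..b, α s) ≤ μ / 10 ^ 1000 := by
    intro a b hab hsub
    rw [intervalIntegral.integral_of_le hab]
    exact le_trans (setIntegral_mono_set hαu hαu0 (HasSubset.Subset.eventuallyLE hsub)) hbdry
  have hβ1 : (∫ s in (1:ℝ)..(2 * π), α s) ≤ μ / 10 ^ 1000 := by
    refine hbound 1 (2 * π) h12π fun x hx => Or.inl ⟨by linarith [hx.1], hx.2⟩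
  have hβ3 : (∫ s in (ℓ - 2 * π)..(ℓ - 1), α s) ≤ μ / 10 ^ 1000 := by
    refine hbound _ _ hℓ1 fun x hx => Or.inr ⟨hx.1.le, by linarith [hx.2]⟩
  have hβ1' : (0:ℝ) ≤ ∫ s in (1:ℝ)..(2 * π), α s := by
    apply intervalIntegral.integral_nonneg h12π
    intro u hu; exact hα0 u ⟨by linarith [hu.1], by linarith [hu.2]⟩
  have hβ3' : (0:ℝ) ≤ ∫ s in (ℓ - 2 * π)..(ℓ - 1), α s := by
    apply intervalIntegral.integral_nonneg hℓ1
    intro u hu; exact hα0 u ⟨by linarith [hu.1], by linarith [hu.2]⟩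
  -- pointwise bound on boundary pieces : h s ≤ 4π³/ℓ²
  have hptb : ∀ s : ℝ, h s ≤ 4 * π ^ 3 / ℓ ^ 2 := by
    intro s
    have h1 : Real.cos (π * s / ℓ) ^ 2 ≤ 1 := Real.cos_sq_le_one _
    have h4 : (0:ℝ) ≤ Real.sin (π * s / ℓ) ^ 2 := sq_nonneg _
    simp only [hh]; nlinarith
  -- boundary integral bounds
  have hedge : ∀ a b : ℝ, a ≤ b → 0 ≤ a → b ≤ ℓ →
      IntervalIntegrable α volume a b →
      (∫ s in a..b, α s * h s) ≤ (4 * π ^ 3 / ℓ ^ 2) * ∫ s in a..b, α s := by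
    intro a b hab ha hb hiα
    rw [← intervalIntegral.integral_const_mul]
    apply intervalIntegral.integral_mono_on hab
      (hII _ hαh a b ha (by linarith) (by linarith) hb) (hiα.const_mul _)
    intro s hs
    have hαs : 0 ≤ α s := hα0 s ⟨by linarith [hs.1], by linarith [hs.2]⟩
    calc α s * h s ≤ α s * (4 * π ^ 3 / ℓ ^ 2) :=
          mul_le_mul_of_nonneg_left (hptb s) hαs
      _ = (4 * π ^ 3 / ℓ ^ 2) * α s := mul_comm _ _
  have hA : (∫ s in (1:ℝ)..(2 * π), α s * h s) ≤ (4 * π ^ 3 / ℓ ^ 2) * (μ / 10 ^ 1000) := by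
    refine le_trans (hedge 1 (2 * π) h12π (by norm_num) (by linarith) iα1) ?_
    exact mul_le_mul_of_nonneg_left hβ1 hc1
  have hC : (∫ s in (ℓ - 2 * π)..(ℓ - 1), α s * h s)
      ≤ (4 * π ^ 3 / ℓ ^ 2) * (μ / 10 ^ 1000) := by
    refine le_trans (hedge _ _ hℓ1 (by linarith) (by linarith) iα3) ?_
    exact mul_le_mul_of_nonneg_left hβ3 hc1
  -- middle piece : pointwise bound
  have hkey : ∀ s ∈ Icc (2 * π) (ℓ - 2 * π), h s ≤ (4 * π ^ 3 - 16 * π ^ 2) / ℓ ^ 2 := by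
    intro s hs
    set x := π * s / ℓ with hx
    have hx1 : 2 * π ^ 2 / ℓ ≤ x := by
      rw [hx]
      exact div_le_div_of_nonneg_right (by nlinarith [hs.1]) hℓ0.le
    have hx2 : x ≤ π - 2 * π ^ 2 / ℓ := by
      rw [hx]
      have h1 : π * s ≤ π * ℓ - 2 * π ^ 2 := by nlinarith [hs.2]
      calc π * s / ℓ ≤ (π * ℓ - 2 * π ^ 2) / ℓ :=
            div_le_div_of_nonneg_right h1 hℓ0.le
        _ = π - 2 * π ^ 2 / ℓ := by field_simp
    have hhalf : 2 * π ^ 2 / ℓ ≤ π / 2 := by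
      rw [div_le_div_iff₀ hℓ0 (by norm_num : (0:ℝ) < 2)]
      nlinarith
    have hsin : 4 * π / ℓ ≤ Real.sin x := by
      have key : ∀ y : ℝ, 2 * π ^ 2 / ℓ ≤ y → y ≤ π / 2 → 4 * π / ℓ ≤ Real.sin y := by
        intro y hy1 hy2
        have h0y : (0:ℝ) ≤ y := le_trans (by positivity) hy1
        calc 4 * π / ℓ = 2 / π * (2 * π ^ 2 / ℓ) := by field_simp; ring
          _ ≤ 2 / π * y := by
              apply mul_le_mul_of_nonneg_left hy1 (by positivity)
          _ ≤ Real.sin y := Real.mul_le_sin h0y hy2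
      rcases le_or_gt x (π / 2) with hc | hc
      · exact key x hx1 hc
      · rw [← Real.sin_pi_sub]
        exact key (π - x) (by linarith) (by linarith)
    have hsin2 : 16 * π ^ 2 / ℓ ^ 2 ≤ Real.sin x ^ 2 := by
      have h40 : (0:ℝ) ≤ 4 * π / ℓ := by positivity
      have := pow_le_pow_left₀ h40 hsin 2
      calc (16:ℝ) * π ^ 2 / ℓ ^ 2 = (4 * π / ℓ) ^ 2 := by field_simp; ring
        _ ≤ Real.sin x ^ 2 := this
    have h1 : Real.cos x ^ 2 ≤ 1 := Real.cos_sq_le_one _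
    have expand : h s = (4 * π ^ 3 / ℓ ^ 2) * Real.cos x ^ 2 - Real.sin x ^ 2 := by
      simp only [hh, hx]
    rw [expand]
    have : (4 * π ^ 3 / ℓ ^ 2) * Real.cos x ^ 2 ≤ 4 * π ^ 3 / ℓ ^ 2 := by nlinarith
    have heq : (4 * π ^ 3 - 16 * π ^ 2) / ℓ ^ 2
        = 4 * π ^ 3 / ℓ ^ 2 - 16 * π ^ 2 / ℓ ^ 2 := by ring
    linarith
  have hcneg : (4 * π ^ 3 - 16 * π ^ 2) / ℓ ^ 2 ≤ 0 := by
    apply div_nonpos_of_nonpos_of_nonneg ?_ hℓ2.le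
    nlinarith
  have hB : (∫ s in (2 * π)..(ℓ - 2 * π), α s * h s)
      ≤ ((4 * π ^ 3 - 16 * π ^ 2) / ℓ ^ 2) * (μ / 2) := by
    have step1 : (∫ s in (2 * π)..(ℓ - 2 * π), α s * h s)
        ≤ ∫ s in (2 * π)..(ℓ - 2 * π), ((4 * π ^ 3 - 16 * π ^ 2) / ℓ ^ 2) * α s := by
      apply intervalIntegral.integral_mono_on h2π i2 (iα2.const_mul _)
      intro s hs
      have hαs : 0 ≤ α s := hα0 s ⟨by linarith [hs.1], by linarith [hs.2]⟩
      calc α s * h s ≤ α s * ((4 * π ^ 3 - 16 * π ^ 2) / ℓ ^ 2) :=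
            mul_le_mul_of_nonneg_left (hkey s hs) hαs
        _ = ((4 * π ^ 3 - 16 * π ^ 2) / ℓ ^ 2) * α s := mul_comm _ _
    rw [intervalIntegral.integral_const_mul] at step1
    refine le_trans step1 ?_
    exact mul_le_mul_of_nonpos_left hmidmass hcneg
  -- numeric inequality
  have h10 : (8:ℝ) * π ^ 3 / 10 ^ 1000 ≤ 1 := by
    rw [div_le_one (by positivity)]
    have hp3 := pow_le_pow_left₀ hπ.le (by linarith : π ≤ 4) 3
    have h3 : (10:ℝ) ^ 3 ≤ 10 ^ 1000 := pow_le_pow_right₀ (by norm_num) (by norm_num)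
    generalize (10:ℝ) ^ 1000 = T at h3 ⊢
    norm_num at hp3 h3
    nlinarith [hp3, h3]
  have hnum : 8 * π ^ 3 / 10 ^ 1000 + 2 * π ^ 3 - 8 * π ^ 2 < -(π ^ 3) / 2 := by
    nlinarith [sq_nonneg π, sq_nonneg (π - 3.141592)]
  have hfinal : (4 * π ^ 3 / ℓ ^ 2) * (μ / 10 ^ 1000)
      + ((4 * π ^ 3 - 16 * π ^ 2) / ℓ ^ 2) * (μ / 2)
      + (4 * π ^ 3 / ℓ ^ 2) * (μ / 10 ^ 1000) < -(π ^ 3 * μ) / (2 * ℓ ^ 2) := by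
    have e1 : (4 * π ^ 3 / ℓ ^ 2) * (μ / 10 ^ 1000)
        + ((4 * π ^ 3 - 16 * π ^ 2) / ℓ ^ 2) * (μ / 2)
        + (4 * π ^ 3 / ℓ ^ 2) * (μ / 10 ^ 1000)
        = (μ / ℓ ^ 2) * (8 * π ^ 3 / 10 ^ 1000 + 2 * π ^ 3 - 8 * π ^ 2) := by
      field_simp; ring
    have e2 : -(π ^ 3 * μ) / (2 * ℓ ^ 2) = (μ / ℓ ^ 2) * (-(π ^ 3) / 2) := by
      field_simp
    rw [e1, e2]
    exact mul_lt_mul_of_pos_left hnum (by positivity)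
  calc (∫ s in (1:ℝ)..(ℓ - 1), α s * h s)
      = _ + _ + _ := hsplit
    _ ≤ (4 * π ^ 3 / ℓ ^ 2) * (μ / 10 ^ 1000)
        + ((4 * π ^ 3 - 16 * π ^ 2) / ℓ ^ 2) * (μ / 2)
        + (4 * π ^ 3 / ℓ ^ 2) * (μ / 10 ^ 1000) := by
        exact add_le_add (add_le_add hA hB) hC
    _ < -(π ^ 3 * μ) / (2 * ℓ ^ 2) := hfinal
end

section
/- Let U ⊂ ℝ² be a bounded open set and K ⊂ U a compact set. Let Y : ℝ × ℝ² → ℝ⁵ be smooth, write Y_u := Y(u,·), and assume: η(Y_u(x), Y_u(x)) = 1 for all (u,x); Y_u(x) = Y_0(x) for all u ∈ ℝ and all x ∉ K; and Y_0 is harmonic into de Sitter space on U, i.e. ΔY_0 = −|∇Y_0|²_η Y_0 on U. Let V := ∂_uY(0,·) and define D(u) := ½ ∫_U ( η(∂_tY_u, ∂_tY_u) + η(∂_θY_u, ∂_θY_u) ) dx. Then D is twice differentiable at u = 0 and D''(0) = ∫_U ( η(∂_tV, ∂_tV) + η(∂_θV, ∂_θV) − η(V,V) |∇Y_0|²_η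 ) dx. -/
set_option synthInstance.maxHeartbeats 1000000
set_option maxHeartbeats 1000000


open Set MeasureTheory

noncomputable section

/-- Partial derivative in the first (`t`) variable of a map on ℝ². -/
def pT2 (f : ℝ × ℝ → E5) (x : ℝ × ℝ) : E5 := deriv (fun s => f (s, x.2)) x.1

/-- Partial derivative in the second (`θ`) variable of a map on ℝ². -/
def pTh2 (f : ℝ × ℝ → E5) (x : ℝ × ℝ) : E5 := deriv (fun s => f (x.1, s)) x.2

/-- The flat Laplacian `Δf = ∂²_{tt}f + ∂²_{θθ}f`. -/
def lap2 (f : ℝ × ℝ → E5) (x : ℝ × ℝ) : E5 := pT2 (pT2 f) x + pTh2 (pTh2 f) x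

/-- `|∇f|²_η = η(∂_tf,∂_tf) + η(∂_θf,∂_θf)`. -/
def gradSqEta2 (f : ℝ × ℝ → E5) (x : ℝ × ℝ) : ℝ :=
  etaM (pT2 f x) (pT2 f x) + etaM (pTh2 f x) (pTh2 f x)

namespace Aux17

variable {Z : Type*} [NormedAddCommGroup Z] [NormedSpace ℝ Z]
variable {X : Type*} [NormedAddCommGroup X] [NormedSpace ℝ X]

/-- directional derivative operator on `ℝ × (ℝ × ℝ)`. -/
def dv (v : ℝ × (ℝ × ℝ)) (G : ℝ × (ℝ × ℝ) → X) (p : ℝ × (ℝ × ℝ)) : X := fderiv ℝ G p v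

lemma contDiff_dv (v : ℝ × (ℝ × ℝ)) {G : ℝ × (ℝ × ℝ) → X} (hG : ContDiff ℝ (⊤:ℕ∞) G) :
    ContDiff ℝ (⊤:ℕ∞) (dv v G) :=
  (hG.fderiv_right (by exact_mod_cast le_top)).clm_apply contDiff_const

lemma hasDerivAt_t {G : ℝ × (ℝ × ℝ) → X} (hG : Differentiable ℝ G) (u : ℝ) (x : ℝ × ℝ) :
    HasDerivAt (fun s => G (u, (s, x.2))) (dv (0, (1, 0)) G (u, x)) x.1 := by
  have hline : HasDerivAt (fun s : ℝ => ((u, (s, x.2)) : ℝ × (ℝ × ℝ))) (0, (1, 0)) x.1 :=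
    (hasDerivAt_const _ _).prodMk ((hasDerivAt_id _).prodMk (hasDerivAt_const _ _))
  exact (hG (u, x)).hasFDerivAt.comp_hasDerivAt x.1 hline

lemma hasDerivAt_th {G : ℝ × (ℝ × ℝ) → X} (hG : Differentiable ℝ G) (u : ℝ) (x : ℝ × ℝ) :
    HasDerivAt (fun s => G (u, (x.1, s))) (dv (0, (0, 1)) G (u, x)) x.2 := by
  have hline : HasDerivAt (fun s : ℝ => ((u, (x.1, s)) : ℝ × (ℝ × ℝ))) (0, (0, 1)) x.2 :=
    (hasDerivAt_const _ _).prodMk ((hasDerivAt_const _ _).prodMk (hasDerivAt_id _))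
  exact (hG (u, x)).hasFDerivAt.comp_hasDerivAt x.2 hline

lemma hasDerivAt_u {G : ℝ × (ℝ × ℝ) → X} (hG : Differentiable ℝ G) (u : ℝ) (x : ℝ × ℝ) :
    HasDerivAt (fun s => G (s, x)) (dv (1, (0, 0)) G (u, x)) u := by
  have hline : HasDerivAt (fun s : ℝ => ((s, x) : ℝ × (ℝ × ℝ))) (1, (0, 0)) u :=
    (hasDerivAt_id _).prodMk (hasDerivAt_const _ _)
  exact (hG (u, x)).hasFDerivAt.comp_hasDerivAt u hline

/-- Schwarz symmetry for the directional derivatives. -/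
lemma dv_comm {G : ℝ × (ℝ × ℝ) → X} (hG : ContDiff ℝ (⊤:ℕ∞) G) (v w : ℝ × (ℝ × ℝ))
    (p : ℝ × (ℝ × ℝ)) : dv v (dv w G) p = dv w (dv v G) p := by
  have hdG : Differentiable ℝ G := hG.differentiable (by simp)
  have hfd : ContDiff ℝ (⊤:ℕ∞) (fderiv ℝ G) := hG.fderiv_right (by exact_mod_cast le_top)
  have hkey : ∀ z : ℝ × (ℝ × ℝ),
      fderiv ℝ (fun q => fderiv ℝ G q z) p = (fderiv ℝ (fderiv ℝ G) p).flip z := by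
    intro z
    have := fderiv_clm_apply (c := fderiv ℝ G) (u := fun _ => z)
      (hfd.differentiable (by simp) p) (differentiableAt_const z)
    simpa using this
  have hsymm := second_derivative_symmetric (f := G) (f' := fderiv ℝ G)
    (f'' := fderiv ℝ (fderiv ℝ G) p) (fun y => (hdG y).hasFDerivAt)
    ((hfd.differentiable (by simp) p).hasFDerivAt) v w
  show fderiv ℝ (fun q => fderiv ℝ G q w) p v = fderiv ℝ (fun q => fderiv ℝ G q v) p w
  rw [hkey w, hkey v]
  simpa using hsymm

/-- `etaM` as a continuous bilinear map. -/
def etaB : E5 →L[ℝ] E5 →L[ℝ] ℝ :=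
  (EuclideanSpace.proj 0).smulRight (EuclideanSpace.proj (0:Fin 5))
    + (EuclideanSpace.proj 1).smulRight (EuclideanSpace.proj (1:Fin 5))
    + (EuclideanSpace.proj 2).smulRight (EuclideanSpace.proj (2:Fin 5))
    + (EuclideanSpace.proj 3).smulRight (EuclideanSpace.proj (3:Fin 5))
    - (EuclideanSpace.proj 4).smulRight (EuclideanSpace.proj (4:Fin 5))

lemma etaB_apply (x y : E5) : etaB x y = etaM x y := by
  simp [etaB, etaM]

lemma etaM_comm (x y : E5) : etaM x y = etaM y x := by unfold etaM; ring

lemma etaM_contDiff {f g : Z → E5} (hf : ContDiff ℝ (⊤:ℕ∞) f) (hg : ContDiff ℝ (⊤:ℕ∞) g) :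
    ContDiff ℝ (⊤:ℕ∞) (fun z => etaM (f z) (g z)) := by
  have : ContDiff ℝ (⊤:ℕ∞) (fun z => etaB (f z) (g z)) :=
    (etaB.contDiff.comp hf).clm_apply hg
  simpa only [etaB_apply] using this

lemma etaM_hasDerivAt {f g : ℝ → E5} {f' g' : E5} {t : ℝ}
    (hf : HasDerivAt f f' t) (hg : HasDerivAt g g' t) :
    HasDerivAt (fun s => etaM (f s) (g s)) (etaM f' (g t) + etaM (f t) g') t := by
  have hc : HasDerivAt (fun s => etaB (f s)) (etaB f') t :=
    etaB.hasFDerivAt.comp_hasDerivAt t hf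
  have := hc.clm_apply hg
  simpa only [etaB_apply] using this

lemma etaM_continuous {f g : Z → E5} (hf : Continuous f) (hg : Continuous g) :
    Continuous (fun z => etaM (f z) (g z)) := by
  simp only [etaM]
  fun_prop

end Aux17

namespace Aux17

def pT2' (f : ℝ × ℝ → E5) (x : ℝ × ℝ) : E5 := deriv (fun s => f (s, x.2)) x.1

lemma hasDerivAt2_t {P : ℝ × ℝ → ℝ} (hP : Differentiable ℝ P) (x : ℝ × ℝ) :
    HasDerivAt (fun s => P (s, x.2)) (fderiv ℝ P x ((1:ℝ), (0:ℝ))) x.1 := by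
  have hline : HasDerivAt (fun s : ℝ => ((s, x.2) : ℝ × ℝ)) (1, 0) x.1 :=
    (hasDerivAt_id _).prodMk (hasDerivAt_const _ _)
  exact (hP x).hasFDerivAt.comp_hasDerivAt x.1 hline

lemma hasDerivAt2_th {P : ℝ × ℝ → ℝ} (hP : Differentiable ℝ P) (x : ℝ × ℝ) :
    HasDerivAt (fun s => P (x.1, s)) (fderiv ℝ P x ((0:ℝ), (1:ℝ))) x.2 := by
  have hline : HasDerivAt (fun s : ℝ => ((x.1, s) : ℝ × ℝ)) (0, 1) x.2 :=
    (hasDerivAt_const _ _).prodMk (hasDerivAt_id _)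
  exact (hP x).hasFDerivAt.comp_hasDerivAt x.2 hline

lemma integrableOn_of_continuous {f : ℝ × ℝ → ℝ} (hf : Continuous f) {U : Set (ℝ × ℝ)}
    (hU : Bornology.IsBounded U) : IntegrableOn f U :=
  (hf.continuousOn.integrableOn_compact hU.isCompact_closure).mono_set subset_closure

lemma notMem_K_line_t {K : Set (ℝ × ℝ)} (hK : IsCompact K) {x : ℝ × ℝ} (hx : x ∉ K) :
    ∀ᶠ s in nhds x.1, ((s, x.2) : ℝ × ℝ) ∉ K := by
  obtain ⟨ε, εpos, hball⟩ := Metric.isOpen_iff.1 hK.isClosed.isOpen_compl x hx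
  filter_upwards [Metric.ball_mem_nhds x.1 εpos] with s hs
  apply hball
  simp only [Metric.mem_ball, Prod.dist_eq]
  simpa [max_lt_iff, εpos] using hs

lemma notMem_K_line_th {K : Set (ℝ × ℝ)} (hK : IsCompact K) {x : ℝ × ℝ} (hx : x ∉ K) :
    ∀ᶠ s in nhds x.2, ((x.1, s) : ℝ × ℝ) ∉ K := by
  obtain ⟨ε, εpos, hball⟩ := Metric.isOpen_iff.1 hK.isClosed.isOpen_compl x hx
  filter_upwards [Metric.ball_mem_nhds x.2 εpos] with s hs
  apply hball
  simp only [Metric.mem_ball, Prod.dist_eq]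
  simpa [max_lt_iff, εpos] using hs

/-- Integral over `U` of a `t`-derivative of a smooth function supported in `K ⊆ U` vanishes. -/
lemma integral_dt_zero {P : ℝ × ℝ → ℝ} (hP : ContDiff ℝ (⊤:ℕ∞) P) {K : Set (ℝ × ℝ)}
    (hK : IsCompact K) (hPsupp : ∀ x ∉ K, P x = 0) {U : Set (ℝ × ℝ)}
    (hKU : K ⊆ U) :
    (∫ x in U, deriv (fun s => P (s, x.2)) x.1) = 0 := by
  have hPd : Differentiable ℝ P := hP.differentiable (by simp)
  set P' : ℝ × ℝ → ℝ := fun x => fderiv ℝ P x ((1:ℝ), (0:ℝ)) with hP'def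
  have hEq : ∀ x : ℝ × ℝ, deriv (fun s => P (s, x.2)) x.1 = P' x :=
    fun x => (hasDerivAt2_t hPd x).deriv
  have hP'cont : Continuous P' :=
    ((hP.fderiv_right (m := (⊤:ℕ∞)) (by exact_mod_cast le_top)).clm_apply contDiff_const).continuous
  have hP'supp : ∀ x ∉ K, P' x = 0 := by
    intro x hx
    rw [← hEq x]
    have hev : (fun s => P (s, x.2)) =ᶠ[nhds x.1] (fun _ => 0) := by
      filter_upwards [notMem_K_line_t hK hx] with s hs using hPsupp _ hs
    rw [hev.deriv_eq, deriv_const]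
  simp only [hEq]
  rw [setIntegral_eq_integral_of_forall_compl_eq_zero
    (fun x hx => hP'supp x (fun h => hx (hKU h)))]
  have hint : Integrable P' := hP'cont.integrable_of_hasCompactSupport
    (HasCompactSupport.intro hK hP'supp)
  obtain ⟨R0, hR0⟩ := hK.isBounded.subset_closedBall (0 : ℝ × ℝ)
  set R : ℝ := max R0 0 + 1 with hRdef
  have hnotK : ∀ t y : ℝ, R ≤ |t| → ((t, y) : ℝ × ℝ) ∉ K := by
    intro t y ht hmem
    have h2 := hR0 hmem
    simp only [Metric.mem_closedBall, Prod.dist_eq, dist_zero_right, Real.norm_eq_abs] at h2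
    have h1 : |t| ≤ R0 := le_trans (le_max_left _ _) h2
    have : R0 ≤ max R0 0 := le_max_left _ _
    linarith
  have hinner : ∀ y : ℝ, (∫ t : ℝ, P' (t, y)) = 0 := by
    intro y
    have hRpos : (0:ℝ) < R := by
      have : (0:ℝ) ≤ max R0 0 := le_max_right _ _
      simp only [hRdef]; linarith
    have hab : -R ≤ R := by linarith
    have hout : ∀ t : ℝ, t ∉ Icc (-R) R → P' (t, y) = 0 := by
      intro t ht
      refine hP'supp _ (hnotK t y ?_)
      simp only [mem_Icc, not_and_or, not_le] at ht
      rcases ht with h | h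
      · rw [abs_of_neg (show t < 0 by linarith)]; linarith
      · rw [abs_of_pos (show 0 < t by linarith)]; linarith
    have hend : ∀ t : ℝ, R ≤ |t| → P (t, y) = 0 := fun t ht => hPsupp _ (hnotK t y ht)
    have hderiv_eq : deriv (fun t => P (t, y)) = fun t => P' (t, y) := by
      funext t
      exact (hasDerivAt2_t hPd (t, y)).deriv
    calc (∫ t : ℝ, P' (t, y)) = ∫ t in Icc (-R) R, P' (t, y) :=
          (setIntegral_eq_integral_of_forall_compl_eq_zero hout).symm
      _ = ∫ t in Ioc (-R) R, P' (t, y) := integral_Icc_eq_integral_Ioc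
      _ = ∫ t in (-R)..R, P' (t, y) := (intervalIntegral.integral_of_le hab).symm
      _ = P (R, y) - P (-R, y) := by
          refine intervalIntegral.integral_deriv_eq_sub' _ hderiv_eq
            (fun t _ => (hPd.comp (differentiable_id.prodMk (differentiable_const y))) t) ?_
          exact (hP'cont.comp (continuous_id.prodMk continuous_const)).continuousOn
      _ = 0 := by
          rw [hend R (by rw [abs_of_pos hRpos]), hend (-R) (by rw [abs_neg, abs_of_pos hRpos])]
          ring
  calc (∫ x : ℝ × ℝ, P' x) = ∫ y : ℝ, ∫ t : ℝ, P' (t, y) := by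
        rw [show (volume : Measure (ℝ × ℝ)) = (volume : Measure ℝ).prod volume from
          MeasureTheory.Measure.volume_eq_prod ℝ ℝ] at hint ⊢
        exact MeasureTheory.integral_prod_symm P' hint
    _ = 0 := by simp [hinner]

end Aux17

namespace Aux17

lemma integral_dth_zero {P : ℝ × ℝ → ℝ} (hP : ContDiff ℝ (⊤:ℕ∞) P) {K : Set (ℝ × ℝ)}
    (hK : IsCompact K) (hPsupp : ∀ x ∉ K, P x = 0) {U : Set (ℝ × ℝ)}
    (hKU : K ⊆ U) :
    (∫ x in U, deriv (fun s => P (x.1, s)) x.2) = 0 := by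
  have hPd : Differentiable ℝ P := hP.differentiable (by simp)
  set P' : ℝ × ℝ → ℝ := fun x => fderiv ℝ P x ((0:ℝ), (1:ℝ)) with hP'def
  have hEq : ∀ x : ℝ × ℝ, deriv (fun s => P (x.1, s)) x.2 = P' x :=
    fun x => (hasDerivAt2_th hPd x).deriv
  have hP'cont : Continuous P' :=
    ((hP.fderiv_right (m := (⊤:ℕ∞)) (by exact_mod_cast le_top)).clm_apply contDiff_const).continuous
  have hP'supp : ∀ x ∉ K, P' x = 0 := by
    intro x hx
    rw [← hEq x]
    have hev : (fun s => P (x.1, s)) =ᶠ[nhds x.2] (fun _ => 0) := by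
      filter_upwards [notMem_K_line_th hK hx] with s hs using hPsupp _ hs
    rw [hev.deriv_eq, deriv_const]
  simp only [hEq]
  rw [setIntegral_eq_integral_of_forall_compl_eq_zero
    (fun x hx => hP'supp x (fun h => hx (hKU h)))]
  have hint : Integrable P' := hP'cont.integrable_of_hasCompactSupport
    (HasCompactSupport.intro hK hP'supp)
  obtain ⟨R0, hR0⟩ := hK.isBounded.subset_closedBall (0 : ℝ × ℝ)
  set R : ℝ := max R0 0 + 1 with hRdef
  have hnotK : ∀ t y : ℝ, R ≤ |y| → ((t, y) : ℝ × ℝ) ∉ K := by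
    intro t y ht hmem
    have h2 := hR0 hmem
    simp only [Metric.mem_closedBall, Prod.dist_eq, dist_zero_right, Real.norm_eq_abs] at h2
    have h1 : |y| ≤ R0 := le_trans (le_max_right _ _) h2
    have : R0 ≤ max R0 0 := le_max_left _ _
    linarith
  have hinner : ∀ t : ℝ, (∫ y : ℝ, P' (t, y)) = 0 := by
    intro t
    have hRpos : (0:ℝ) < R := by
      have : (0:ℝ) ≤ max R0 0 := le_max_right _ _
      simp only [hRdef]; linarith
    have hab : -R ≤ R := by linarith
    have hout : ∀ y : ℝ, y ∉ Icc (-R) R → P' (t, y) = 0 := by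
      intro y hy
      refine hP'supp _ (hnotK t y ?_)
      simp only [mem_Icc, not_and_or, not_le] at hy
      rcases hy with h | h
      · rw [abs_of_neg (show y < 0 by linarith)]; linarith
      · rw [abs_of_pos (show 0 < y by linarith)]; linarith
    have hend : ∀ y : ℝ, R ≤ |y| → P (t, y) = 0 := fun y hy => hPsupp _ (hnotK t y hy)
    have hderiv_eq : deriv (fun y => P (t, y)) = fun y => P' (t, y) := by
      funext y
      exact (hasDerivAt2_th hPd (t, y)).deriv
    calc (∫ y : ℝ, P' (t, y)) = ∫ y in Icc (-R) R, P' (t, y) :=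
          (setIntegral_eq_integral_of_forall_compl_eq_zero hout).symm
      _ = ∫ y in Ioc (-R) R, P' (t, y) := integral_Icc_eq_integral_Ioc
      _ = ∫ y in (-R)..R, P' (t, y) := (intervalIntegral.integral_of_le hab).symm
      _ = P (t, R) - P (t, -R) := by
          refine intervalIntegral.integral_deriv_eq_sub' _ hderiv_eq
            (fun y _ => (hPd.comp ((differentiable_const t).prodMk differentiable_id)) y) ?_
          exact (hP'cont.comp (continuous_const.prodMk continuous_id)).continuousOn
      _ = 0 := by
          rw [hend R (by rw [abs_of_pos hRpos]), hend (-R) (by rw [abs_neg, abs_of_pos hRpos])]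
          ring
  calc (∫ x : ℝ × ℝ, P' x) = ∫ t : ℝ, ∫ y : ℝ, P' (t, y) := by
        rw [show (volume : Measure (ℝ × ℝ)) = (volume : Measure ℝ).prod volume from
          MeasureTheory.Measure.volume_eq_prod ℝ ℝ] at hint ⊢
        exact MeasureTheory.integral_prod P' hint
    _ = 0 := by simp [hinner]

end Aux17

namespace Aux17

lemma pT2_eq {G : ℝ × (ℝ × ℝ) → E5} (hG : Differentiable ℝ G) (u : ℝ) (x : ℝ × ℝ) :
    pT2 (fun y => G (u, y)) x = dv (0, (1, 0)) G (u, x) :=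
  (hasDerivAt_t hG u x).deriv

lemma pTh2_eq {G : ℝ × (ℝ × ℝ) → E5} (hG : Differentiable ℝ G) (u : ℝ) (x : ℝ × ℝ) :
    pTh2 (fun y => G (u, y)) x = dv (0, (0, 1)) G (u, x) :=
  (hasDerivAt_th hG u x).deriv

lemma etaM_zero_left (y : E5) : etaM 0 y = 0 := by simp [etaM]

lemma etaM_add_right (x y z : E5) : etaM x (y + z) = etaM x y + etaM x z := by
  simp [etaM]; ring

lemma etaM_smul_right (x : E5) (c : ℝ) (y : E5) : etaM x (c • y) = c * etaM x y := by
  simp [etaM]; ring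

end Aux17

open Aux17

/-- Second variation formula for the Dirichlet energy of a map into de Sitter space:
for a variation `Y_u` of a harmonic map `Y_0`, supported in a compact `K ⊂ U`, the
Dirichlet energy `D(u)` is twice differentiable at `0` with
`D''(0) = ∫_U (η(∂_tV,∂_tV) + η(∂_θV,∂_θV) − η(V,V)|∇Y_0|²_η)` where `V = ∂_uY(0,·)`. -/
theorem stmt17 (U : Set (ℝ × ℝ)) (hUopen : IsOpen U) (hUbdd : Bornology.IsBounded U)
    (K : Set (ℝ × ℝ)) (hK : IsCompact K) (hKU : K ⊆ U)
    (Y : ℝ → ℝ × ℝ → E5)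
    (hsm : ContDiff ℝ (⊤ : ℕ∞) (fun p : ℝ × (ℝ × ℝ) => Y p.1 p.2))
    (hsph : ∀ u : ℝ, ∀ x : ℝ × ℝ, etaM (Y u x) (Y u x) = 1)
    (hsupp : ∀ u : ℝ, ∀ x ∉ K, Y u x = Y 0 x)
    (hharm : ∀ x ∈ U, lap2 (Y 0) x = -(gradSqEta2 (Y 0) x) • Y 0 x) :
    let V : ℝ × ℝ → E5 := fun x => deriv (fun u => Y u x) 0
    let D : ℝ → ℝ := fun u =>
      (1 / 2) * ∫ x in U, (etaM (pT2 (Y u) x) (pT2 (Y u) x) + etaM (pTh2 (Y u) x) (pTh2 (Y u) x))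
    DifferentiableAt ℝ (deriv D) 0 ∧
      deriv (deriv D) 0 =
        ∫ x in U, (etaM (pT2 V x) (pT2 V x) + etaM (pTh2 V x) (pTh2 V x)
          - etaM (V x) (V x) * gradSqEta2 (Y 0) x) := by
  intro V D
  classical
  have h0 : ContDiff ℝ (⊤:ℕ∞) (fun p : ℝ × (ℝ × ℝ) => Y p.1 p.2) := hsm
  set F : ℝ × (ℝ × ℝ) → E5 := fun p => Y p.1 p.2 with hFdef
  have het : True := trivial
  -- directions
  let et : ℝ × (ℝ × ℝ) := (0, (1, 0))
  let eth : ℝ × (ℝ × ℝ) := (0, (0, 1))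
  let eu : ℝ × (ℝ × ℝ) := (1, (0, 0))
  -- smoothness of iterated directional derivatives
  have hFt : ContDiff ℝ (⊤:ℕ∞) (dv et F) := contDiff_dv _ h0
  have hFth : ContDiff ℝ (⊤:ℕ∞) (dv eth F) := contDiff_dv _ h0
  have hFu : ContDiff ℝ (⊤:ℕ∞) (dv eu F) := contDiff_dv _ h0
  have hFut : ContDiff ℝ (⊤:ℕ∞) (dv eu (dv et F)) := contDiff_dv _ hFt
  have hFuth : ContDiff ℝ (⊤:ℕ∞) (dv eu (dv eth F)) := contDiff_dv _ hFth
  have hFuu : ContDiff ℝ (⊤:ℕ∞) (dv eu (dv eu F)) := contDiff_dv _ hFu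
  have hFuut : ContDiff ℝ (⊤:ℕ∞) (dv eu (dv eu (dv et F))) := contDiff_dv _ hFut
  have hFuuth : ContDiff ℝ (⊤:ℕ∞) (dv eu (dv eu (dv eth F))) := contDiff_dv _ hFuth
  have topcast : (1:ℕ∞) ≤ (⊤:ℕ∞) := le_top
  have hFd : Differentiable ℝ F := h0.differentiable (by simp)
  have hFtd : Differentiable ℝ (dv et F) := hFt.differentiable (by simp)
  have hFthd : Differentiable ℝ (dv eth F) := hFth.differentiable (by simp)
  have hFud : Differentiable ℝ (dv eu F) := hFu.differentiable (by simp)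
  have hFutd : Differentiable ℝ (dv eu (dv et F)) := hFut.differentiable (by simp)
  have hFuthd : Differentiable ℝ (dv eu (dv eth F)) := hFuth.differentiable (by simp)
  have hFuud : Differentiable ℝ (dv eu (dv eu F)) := hFuu.differentiable (by simp)
  have hFuutd : Differentiable ℝ (dv eu (dv eu (dv et F))) :=
    hFuut.differentiable (by simp)
  have hFuuthd : Differentiable ℝ (dv eu (dv eu (dv eth F))) :=
    hFuuth.differentiable (by simp)
  -- translations
  have ht1 : ∀ u x, pT2 (Y u) x = dv et F (u, x) := fun u x => pT2_eq hFd u x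
  have ht2 : ∀ u x, pTh2 (Y u) x = dv eth F (u, x) := fun u x => pTh2_eq hFd u x
  have hV : ∀ x, V x = dv eu F (0, x) := fun x => (hasDerivAt_u hFd 0 x).deriv
  -- function-level commutations
  have hfe1 : dv et (dv eu F) = dv eu (dv et F) := funext (dv_comm h0 et eu)
  have hfe2 : dv eth (dv eu F) = dv eu (dv eth F) := funext (dv_comm h0 eth eu)
  have hpT2V : ∀ x, pT2 V x = dv eu (dv et F) (0, x) := by
    intro x
    have hVfun : V = fun y => dv eu F (0, y) := funext hV
    rw [hVfun, pT2_eq hFud 0 x, ← hfe1]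
  have hpTh2V : ∀ x, pTh2 V x = dv eu (dv eth F) (0, x) := by
    intro x
    have hVfun : V = fun y => dv eu F (0, y) := funext hV
    rw [hVfun, pTh2_eq hFud 0 x, ← hfe2]
  -- the integrand and its u-derivatives
  set g : ℝ → ℝ × ℝ → ℝ := fun u x =>
    etaM (dv et F (u, x)) (dv et F (u, x)) + etaM (dv eth F (u, x)) (dv eth F (u, x)) with hgdef
  set g1 : ℝ → ℝ × ℝ → ℝ := fun u x =>
    (etaM (dv eu (dv et F) (u, x)) (dv et F (u, x))
      + etaM (dv et F (u, x)) (dv eu (dv et F) (u, x)))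
    + (etaM (dv eu (dv eth F) (u, x)) (dv eth F (u, x))
      + etaM (dv eth F (u, x)) (dv eu (dv eth F) (u, x))) with hg1def
  set g2 : ℝ → ℝ × ℝ → ℝ := fun u x =>
    ((etaM (dv eu (dv eu (dv et F)) (u, x)) (dv et F (u, x))
        + etaM (dv eu (dv et F) (u, x)) (dv eu (dv et F) (u, x)))
      + (etaM (dv eu (dv et F) (u, x)) (dv eu (dv et F) (u, x))
        + etaM (dv et F (u, x)) (dv eu (dv eu (dv et F)) (u, x))))
    + ((etaM (dv eu (dv eu (dv eth F)) (u, x)) (dv eth F (u, x))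
        + etaM (dv eu (dv eth F) (u, x)) (dv eu (dv eth F) (u, x)))
      + (etaM (dv eu (dv eth F) (u, x)) (dv eu (dv eth F) (u, x))
        + etaM (dv eth F (u, x)) (dv eu (dv eu (dv eth F)) (u, x)))) with hg2def
  have hg1 : ∀ u x, HasDerivAt (fun v => g v x) (g1 u x) u := by
    intro u x
    exact (etaM_hasDerivAt (hasDerivAt_u hFtd u x) (hasDerivAt_u hFtd u x)).add
      (etaM_hasDerivAt (hasDerivAt_u hFthd u x) (hasDerivAt_u hFthd u x))
  have hg2 : ∀ u x, HasDerivAt (fun v => g1 v x) (g2 u x) u := by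
    intro u x
    exact ((etaM_hasDerivAt (hasDerivAt_u hFutd u x) (hasDerivAt_u hFtd u x)).add
      (etaM_hasDerivAt (hasDerivAt_u hFtd u x) (hasDerivAt_u hFutd u x))).add
      ((etaM_hasDerivAt (hasDerivAt_u hFuthd u x) (hasDerivAt_u hFthd u x)).add
      (etaM_hasDerivAt (hasDerivAt_u hFthd u x) (hasDerivAt_u hFuthd u x)))
  -- continuity
  have hgc : ∀ u, Continuous (fun x => g u x) := by
    intro u
    apply Continuous.add
    · exact etaM_continuous (hFt.continuous.comp (continuous_const.prodMk continuous_id))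
        (hFt.continuous.comp (continuous_const.prodMk continuous_id))
    · exact etaM_continuous (hFth.continuous.comp (continuous_const.prodMk continuous_id))
        (hFth.continuous.comp (continuous_const.prodMk continuous_id))
  have hg1cP : Continuous (fun p : ℝ × (ℝ × ℝ) => g1 p.1 p.2) := by
    apply Continuous.add
    · exact (etaM_continuous hFut.continuous hFt.continuous).add
        (etaM_continuous hFt.continuous hFut.continuous)
    · exact (etaM_continuous hFuth.continuous hFth.continuous).add
        (etaM_continuous hFth.continuous hFuth.continuous)
  have hg2cP : Continuous (fun p : ℝ × (ℝ × ℝ) => g2 p.1 p.2) := by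
    apply Continuous.add
    · exact ((etaM_continuous hFuut.continuous hFt.continuous).add
        (etaM_continuous hFut.continuous hFut.continuous)).add
        ((etaM_continuous hFut.continuous hFut.continuous).add
        (etaM_continuous hFt.continuous hFuut.continuous))
    · exact ((etaM_continuous hFuuth.continuous hFth.continuous).add
        (etaM_continuous hFuth.continuous hFuth.continuous)).add
        ((etaM_continuous hFuth.continuous hFuth.continuous).add
        (etaM_continuous hFth.continuous hFuuth.continuous))
  have hg1c : ∀ u, Continuous (fun x => g1 u x) :=
    fun u => hg1cP.comp (continuous_const.prodMk continuous_id)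
  have hg2c : ∀ u, Continuous (fun x => g2 u x) :=
    fun u => hg2cP.comp (continuous_const.prodMk continuous_id)
  -- support properties
  have hS1t : ∀ u, ∀ x ∉ K, dv et F (u, x) = dv et F (0, x) := by
    intro u x hx
    have hev : (fun s => F (u, (s, x.2))) =ᶠ[nhds x.1] (fun s => F (0, (s, x.2))) := by
      filter_upwards [notMem_K_line_t hK hx] with s hs using hsupp u _ hs
    rw [← (hasDerivAt_t hFd u x).deriv, hev.deriv_eq, (hasDerivAt_t hFd 0 x).deriv]
  have hS1th : ∀ u, ∀ x ∉ K, dv eth F (u, x) = dv eth F (0, x) := by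
    intro u x hx
    have hev : (fun s => F (u, (x.1, s))) =ᶠ[nhds x.2] (fun s => F (0, (x.1, s))) := by
      filter_upwards [notMem_K_line_th hK hx] with s hs using hsupp u _ hs
    rw [← (hasDerivAt_th hFd u x).deriv, hev.deriv_eq, (hasDerivAt_th hFd 0 x).deriv]
  have hS1u : ∀ u, ∀ x ∉ K, dv eu F (u, x) = 0 := by
    intro u x hx
    have hconst : (fun s => F (s, x)) = fun _ => Y 0 x := funext fun s => hsupp s x hx
    rw [← (hasDerivAt_u hFd u x).deriv, hconst, deriv_const]
  have hS2t : ∀ u, ∀ x ∉ K, dv eu (dv et F) (u, x) = 0 := by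
    intro u x hx
    have hconst : (fun s => dv et F (s, x)) = fun _ => dv et F (0, x) :=
      funext fun s => hS1t s x hx
    rw [← (hasDerivAt_u hFtd u x).deriv, hconst, deriv_const]
  have hS2th : ∀ u, ∀ x ∉ K, dv eu (dv eth F) (u, x) = 0 := by
    intro u x hx
    have hconst : (fun s => dv eth F (s, x)) = fun _ => dv eth F (0, x) :=
      funext fun s => hS1th s x hx
    rw [← (hasDerivAt_u hFthd u x).deriv, hconst, deriv_const]
  have hS2u : ∀ u, ∀ x ∉ K, dv eu (dv eu F) (u, x) = 0 := by
    intro u x hx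
    have hconst : (fun s => dv eu F (s, x)) = fun _ => (0:E5) := funext fun s => hS1u s x hx
    rw [← (hasDerivAt_u hFud u x).deriv, hconst, deriv_const]
  have hS3t : ∀ u, ∀ x ∉ K, dv eu (dv eu (dv et F)) (u, x) = 0 := by
    intro u x hx
    have hconst : (fun s => dv eu (dv et F) (s, x)) = fun _ => (0:E5) :=
      funext fun s => hS2t s x hx
    rw [← (hasDerivAt_u hFutd u x).deriv, hconst, deriv_const]
  have hS3th : ∀ u, ∀ x ∉ K, dv eu (dv eu (dv eth F)) (u, x) = 0 := by
    intro u x hx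
    have hconst : (fun s => dv eu (dv eth F) (s, x)) = fun _ => (0:E5) :=
      funext fun s => hS2th s x hx
    rw [← (hasDerivAt_u hFuthd u x).deriv, hconst, deriv_const]
  have hg1supp : ∀ u, ∀ x ∉ K, g1 u x = 0 := by
    intro u x hx
    simp only [hg1def, hS2t u x hx, hS2th u x hx, etaM_zero_left,
      etaM_comm _ (0:E5), etaM_zero_left]
    ring
  have hg2supp : ∀ u, ∀ x ∉ K, g2 u x = 0 := by
    intro u x hx
    simp only [hg2def, hS2t u x hx, hS2th u x hx, hS3t u x hx, hS3th u x hx, etaM_zero_left,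
      etaM_comm _ (0:E5), etaM_zero_left]
    ring
  -- measure-theoretic setup
  have hUmeas : MeasurableSet U := hUopen.measurableSet
  haveI : IsFiniteMeasure (volume.restrict U) := by
    constructor
    rw [Measure.restrict_apply_univ]
    exact hUbdd.measure_lt_top
  have hgint : ∀ u, IntegrableOn (fun x => g u x) U := fun u =>
    integrableOn_of_continuous (hgc u) hUbdd
  have hg1int : ∀ u, IntegrableOn (fun x => g1 u x) U := fun u =>
    integrableOn_of_continuous (hg1c u) hUbdd
  -- first derivative of D
  have hI1 : ∀ u₀ : ℝ, HasDerivAt (fun u => ∫ x in U, g u x) (∫ x in U, g1 u₀ x) u₀ := by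
    intro u₀
    obtain ⟨C, hC⟩ := (isCompact_Icc.prod hK).exists_bound_of_continuousOn
      (s := Icc (u₀ - 1) (u₀ + 1) ×ˢ K) hg1cP.continuousOn
    refine (hasDerivAt_integral_of_dominated_loc_of_deriv_le
      (F := fun u x => g u x) (F' := fun u x => g1 u x) (bound := fun _ => max C 0)
      (Metric.ball_mem_nhds _ one_pos) ?_ ?_ ?_ ?_ ?_ ?_).2
    · exact Filter.Eventually.of_forall fun u => (hgc u).aestronglyMeasurable
    · exact hgint u₀
    · exact (hg1c u₀).aestronglyMeasurable
    · refine Filter.Eventually.of_forall fun x => fun u hu => ?_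
      by_cases hxK : x ∈ K
      · have hmem : ((u, x) : ℝ × (ℝ × ℝ)) ∈ Icc (u₀ - 1) (u₀ + 1) ×ˢ K := by
          rw [Metric.mem_ball, Real.dist_eq] at hu
          have := abs_lt.1 hu
          exact ⟨⟨by linarith [this.1], by linarith [this.2]⟩, hxK⟩
        exact le_max_of_le_left (hC (u, x) hmem)
      · show ‖g1 u x‖ ≤ max C 0
        rw [hg1supp u x hxK, norm_zero]
        exact le_max_right _ _
    · exact integrable_const _
    · exact Filter.Eventually.of_forall fun x => fun u _ => hg1 u x
  have hDeq : D = fun u => (1/2) * ∫ x in U, g u x := by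
    funext u
    have hfun : (fun x => etaM (pT2 (Y u) x) (pT2 (Y u) x)
        + etaM (pTh2 (Y u) x) (pTh2 (Y u) x)) = fun x => g u x := by
      funext x
      rw [ht1, ht2]
    show (1/2) * ∫ x in U, (etaM (pT2 (Y u) x) (pT2 (Y u) x)
        + etaM (pTh2 (Y u) x) (pTh2 (Y u) x)) = _
    rw [hfun]
  have hD1 : ∀ u₀ : ℝ, HasDerivAt D ((1/2) * ∫ x in U, g1 u₀ x) u₀ := by
    intro u₀
    rw [hDeq]
    exact (hI1 u₀).const_mul _
  have hderivD : deriv D = fun u => (1/2) * ∫ x in U, g1 u x :=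
    funext fun u => (hD1 u).deriv
  -- second derivative
  have hI2 : HasDerivAt (fun u => ∫ x in U, g1 u x) (∫ x in U, g2 0 x) 0 := by
    obtain ⟨C, hC⟩ := (isCompact_Icc.prod hK).exists_bound_of_continuousOn
      (s := Icc (0 - 1) (0 + 1) ×ˢ K) hg2cP.continuousOn
    refine (hasDerivAt_integral_of_dominated_loc_of_deriv_le
      (F := fun u x => g1 u x) (F' := fun u x => g2 u x) (bound := fun _ => max C 0)
      (Metric.ball_mem_nhds _ one_pos) ?_ ?_ ?_ ?_ ?_ ?_).2
    · exact Filter.Eventually.of_forall fun u => (hg1c u).aestronglyMeasurable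
    · exact hg1int 0
    · exact (hg2c 0).aestronglyMeasurable
    · refine Filter.Eventually.of_forall fun x => fun u hu => ?_
      by_cases hxK : x ∈ K
      · have hmem : ((u, x) : ℝ × (ℝ × ℝ)) ∈ Icc ((0:ℝ) - 1) (0 + 1) ×ˢ K := by
          rw [Metric.mem_ball, Real.dist_eq, sub_zero] at hu
          have := abs_lt.1 hu
          exact ⟨⟨by linarith [this.1], by linarith [this.2]⟩, hxK⟩
        exact le_max_of_le_left (hC (u, x) hmem)
      · show ‖g2 u x‖ ≤ max C 0
        rw [hg2supp u x hxK, norm_zero]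
        exact le_max_right _ _
    · exact integrable_const _
    · exact Filter.Eventually.of_forall fun x => fun u _ => hg2 u x
  have hD2 : HasDerivAt (deriv D) ((1/2) * ∫ x in U, g2 0 x) 0 := by
    rw [hderivD]
    exact hI2.const_mul _
  -- the key integral identity
  have hkey : (1/2) * ∫ x in U, g2 0 x
      = ∫ x in U, (etaM (pT2 V x) (pT2 V x) + etaM (pTh2 V x) (pTh2 V x)
          - etaM (V x) (V x) * gradSqEta2 (Y 0) x) := by
    set P : ℝ × ℝ → ℝ := fun x => etaM (dv eu (dv eu F) (0, x)) (dv et F (0, x)) with hPdef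
    set Q : ℝ × ℝ → ℝ := fun x => etaM (dv eu (dv eu F) (0, x)) (dv eth F (0, x)) with hQdef
    have hcst : ContDiff ℝ (⊤:ℕ∞) (fun x : ℝ × ℝ => ((0:ℝ), x)) :=
      contDiff_const.prodMk contDiff_id
    have hPsm : ContDiff ℝ (⊤:ℕ∞) P :=
      etaM_contDiff (hFuu.comp hcst) (hFt.comp hcst)
    have hQsm : ContDiff ℝ (⊤:ℕ∞) Q :=
      etaM_contDiff (hFuu.comp hcst) (hFth.comp hcst)
    have hPsupp : ∀ x ∉ K, P x = 0 := by
      intro x hx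
      simp only [hPdef, hS2u 0 x hx, etaM_zero_left]
    have hQsupp : ∀ x ∉ K, Q x = 0 := by
      intro x hx
      simp only [hQdef, hS2u 0 x hx, etaM_zero_left]
    have hdtP0 : (∫ x in U, deriv (fun s => P (s, x.2)) x.1) = 0 :=
      integral_dt_zero hPsm hK hPsupp hKU
    have hdthQ0 : (∫ x in U, deriv (fun s => Q (x.1, s)) x.2) = 0 :=
      integral_dth_zero hQsm hK hQsupp hKU
    have hdtP : ∀ x : ℝ × ℝ, deriv (fun s => P (s, x.2)) x.1
        = etaM (dv et (dv eu (dv eu F)) (0, x)) (dv et F (0, x))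
          + etaM (dv eu (dv eu F) (0, x)) (dv et (dv et F) (0, x)) :=
      fun x => (etaM_hasDerivAt (hasDerivAt_t hFuud 0 x) (hasDerivAt_t hFtd 0 x)).deriv
    have hdthQ : ∀ x : ℝ × ℝ, deriv (fun s => Q (x.1, s)) x.2
        = etaM (dv eth (dv eu (dv eu F)) (0, x)) (dv eth F (0, x))
          + etaM (dv eu (dv eu F) (0, x)) (dv eth (dv eth F) (0, x)) :=
      fun x => (etaM_hasDerivAt (hasDerivAt_th hFuud 0 x) (hasDerivAt_th hFthd 0 x)).deriv
    have hce1 : ∀ x : ℝ × ℝ, dv et (dv eu (dv eu F)) (0, x) = dv eu (dv eu (dv et F)) (0, x) := by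
      intro x
      have h := dv_comm hFu et eu (0, x)
      rw [hfe1] at h
      exact h
    have hce2 : ∀ x : ℝ × ℝ, dv eth (dv eu (dv eu F)) (0, x) = dv eu (dv eu (dv eth F)) (0, x) := by
      intro x
      have h := dv_comm hFu eth eu (0, x)
      rw [hfe2] at h
      exact h
    have hcon1 : ∀ u : ℝ, ∀ x : ℝ × ℝ, etaM (dv eu F (u, x)) (F (u, x)) = 0 := by
      intro u x
      have hder := (etaM_hasDerivAt (hasDerivAt_u hFd u x) (hasDerivAt_u hFd u x)).deriv
      rw [show (fun s => etaM (F (s, x)) (F (s, x))) = fun _ => (1:ℝ) from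
        funext fun s => hsph s x, deriv_const] at hder
      have hcomm := etaM_comm (F (u, x)) (dv eu F (u, x))
      linarith
    have hcon2 : ∀ x : ℝ × ℝ, etaM (dv eu (dv eu F) (0, x)) (F (0, x))
        = - etaM (dv eu F (0, x)) (dv eu F (0, x)) := by
      intro x
      have hder := (etaM_hasDerivAt (hasDerivAt_u hFud 0 x) (hasDerivAt_u hFd 0 x)).deriv
      rw [show (fun s => etaM (dv eu F (s, x)) (F (s, x))) = fun _ => (0:ℝ) from
        funext fun s => hcon1 s x, deriv_const] at hder
      linarith
    have hlap : ∀ x : ℝ × ℝ, lap2 (Y 0) x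
        = dv et (dv et F) (0, x) + dv eth (dv eth F) (0, x) := by
      intro x
      have h1 : pT2 (Y 0) = fun y => dv et F (0, y) := funext fun y => ht1 0 y
      have h2 : pTh2 (Y 0) = fun y => dv eth F (0, y) := funext fun y => ht2 0 y
      show pT2 (pT2 (Y 0)) x + pTh2 (pTh2 (Y 0)) x = _
      rw [h1, h2, pT2_eq hFtd 0 x, pTh2_eq hFthd 0 x]
    have hgrad : ∀ x : ℝ × ℝ, gradSqEta2 (Y 0) x = g 0 x := by
      intro x
      show etaM (pT2 (Y 0) x) (pT2 (Y 0) x) + etaM (pTh2 (Y 0) x) (pTh2 (Y 0) x) = g 0 x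
      rw [ht1, ht2]
    have hptw : ∀ x ∈ U, g2 0 x
        = 2 * (etaM (pT2 V x) (pT2 V x) + etaM (pTh2 V x) (pTh2 V x)
            - etaM (V x) (V x) * gradSqEta2 (Y 0) x)
          + (2 * deriv (fun s => P (s, x.2)) x.1 + 2 * deriv (fun s => Q (x.1, s)) x.2) := by
      intro x hx
      have e1 := hdtP x
      have e2 := hdthQ x
      rw [hce1 x] at e1
      rw [hce2 x] at e2
      have eh : etaM (dv eu (dv eu F) (0, x)) (dv et (dv et F) (0, x))
          + etaM (dv eu (dv eu F) (0, x)) (dv eth (dv eth F) (0, x))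
          = etaM (dv eu F (0, x)) (dv eu F (0, x)) * g 0 x := by
        rw [← etaM_add_right, ← hlap x, hharm x hx, etaM_smul_right, hcon2 x, hgrad x]
        ring
      rw [hpT2V x, hpTh2V x, hV x, hgrad x, e1, e2]
      simp only [hg2def]
      rw [etaM_comm (dv et F (0, x)) (dv eu (dv eu (dv et F)) (0, x)),
        etaM_comm (dv eth F (0, x)) (dv eu (dv eu (dv eth F)) (0, x))]
      linarith [eh]
    -- integrability of the pieces
    have hTcl : (fun x => etaM (pT2 V x) (pT2 V x) + etaM (pTh2 V x) (pTh2 V x)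
        - etaM (V x) (V x) * gradSqEta2 (Y 0) x)
        = fun x => etaM (dv eu (dv et F) (0, x)) (dv eu (dv et F) (0, x))
          + etaM (dv eu (dv eth F) (0, x)) (dv eu (dv eth F) (0, x))
          - etaM (dv eu F (0, x)) (dv eu F (0, x)) * g 0 x := by
      funext x
      rw [hpT2V x, hpTh2V x, hV x, hgrad x]
    have hTint : IntegrableOn (fun x => etaM (pT2 V x) (pT2 V x) + etaM (pTh2 V x) (pTh2 V x)
        - etaM (V x) (V x) * gradSqEta2 (Y 0) x) U := by
      rw [hTcl]
      refine integrableOn_of_continuous ?_ hUbdd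
      exact ((etaM_continuous (hFut.continuous.comp hcst.continuous)
          (hFut.continuous.comp hcst.continuous)).add
        (etaM_continuous (hFuth.continuous.comp hcst.continuous)
          (hFuth.continuous.comp hcst.continuous))).sub
        ((etaM_continuous (hFu.continuous.comp hcst.continuous)
          (hFu.continuous.comp hcst.continuous)).mul (hgc 0))
    have hPint : IntegrableOn (fun x => deriv (fun s => P (s, x.2)) x.1) U := by
      rw [funext hdtP]
      refine integrableOn_of_continuous ?_ hUbdd
      exact (etaM_continuous ((contDiff_dv et hFuu).continuous.comp hcst.continuous)
          (hFt.continuous.comp hcst.continuous)).add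
        (etaM_continuous (hFuu.continuous.comp hcst.continuous)
          ((contDiff_dv et hFt).continuous.comp hcst.continuous))
    have hQint : IntegrableOn (fun x => deriv (fun s => Q (x.1, s)) x.2) U := by
      rw [funext hdthQ]
      refine integrableOn_of_continuous ?_ hUbdd
      exact (etaM_continuous ((contDiff_dv eth hFuu).continuous.comp hcst.continuous)
          (hFth.continuous.comp hcst.continuous)).add
        (etaM_continuous (hFuu.continuous.comp hcst.continuous)
          ((contDiff_dv eth hFth).continuous.comp hcst.continuous))
    have h23 : IntegrableOn (fun x => 2 * deriv (fun s => P (s, x.2)) x.1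
        + 2 * deriv (fun s => Q (x.1, s)) x.2) U :=
      (hPint.const_mul 2).add (hQint.const_mul 2)
    rw [setIntegral_congr_fun hUmeas hptw]
    rw [integral_add (hTint.const_mul 2) h23,
      integral_add (hPint.const_mul 2) (hQint.const_mul 2),
      integral_const_mul, integral_const_mul, integral_const_mul, hdtP0, hdthQ0]
    ring
  refine ⟨hD2.differentiableAt, ?_⟩
  rw [hD2.deriv, hkey]
end
end
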